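/- Fix a natural number k ≥ 1 and a real number ε with 0 ≤ ε < 1. For n ≥ k define E[N_n] = ∑_{r=k}^{n} ∑_{e=0}^{∞} min(r+e, n) · C(r+e−1, e) ε^e (1−ε)^r · P_{M_n}(r) and E[N_n²] = ∑_{r=k}^{n} ∑_{e=0}^{∞} min((r+e)², n²) · C(r+e−1, e) ε^e (1−ε)^r · P_{M_n}(r), where P_{M_n}(r) = 2^{k−r} ∏_{l=0}^{n−r−1} (1 − 2^{l−(n−k)}). Then lim_{n→∞} ( E[N_n²] − E[N_n]² ) = ((k + c₀)ε + c₀ + c₁)/(1 − ε)², where c₀ = ∑_{i=1}^{∞} 1/(2^i − 1) and c₁ = ∑_{i=1}^{∞} 1/(2^i − 1)². -/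

import Mathlib

open Filter

/-- The Erdős–Borwein constant `c₀ = ∑_{i=1}^{∞} 1/(2^i − 1)`. -/
noncomputable def c₀ : ℝ := ∑' i : ℕ, 1 / ((2 : ℝ) ^ (i + 1) - 1)

/-- The digital search tree constant `c₁ = ∑_{i=1}^{∞} 1/(2^i − 1)²`. -/
noncomputable def c₁ : ℝ := ∑' i : ℕ, 1 / ((2 : ℝ) ^ (i + 1) - 1) ^ 2

/-- `P_{M_n}(r) = 2^{k−r} ∏_{l=0}^{n−r−1} (1 − 2^{l−(n−k)})`. -/
noncomputable def PM (k n r : ℕ) : ℝ :=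
  (2 : ℝ) ^ ((k : ℤ) - (r : ℤ)) *
    ∏ l ∈ Finset.range (n - r), (1 - (2 : ℝ) ^ ((l : ℤ) - ((n : ℤ) - (k : ℤ))))

/-- `E[N_n] = ∑_{r=k}^{n} ∑_{e=0}^{∞} min(r+e, n) · C(r+e−1, e) ε^e (1−ε)^r · P_{M_n}(r)`. -/
noncomputable def EN (k : ℕ) (ε : ℝ) (n : ℕ) : ℝ :=
  ∑ r ∈ Finset.Icc k n, ∑' e : ℕ,
    (min (r + e) n : ℝ) * (Nat.choose (r + e - 1) e : ℝ) * ε ^ e * (1 - ε) ^ r * PM k n r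

/-- `E[N_n²] = ∑_{r=k}^{n} ∑_{e=0}^{∞} min((r+e)², n²) · C(r+e−1, e) ε^e (1−ε)^r · P_{M_n}(r)`. -/
noncomputable def EN2 (k : ℕ) (ε : ℝ) (n : ℕ) : ℝ :=
  ∑ r ∈ Finset.Icc k n, ∑' e : ℕ,
    (min ((r + e) ^ 2) (n ^ 2) : ℝ) * (Nat.choose (r + e - 1) e : ℝ) * ε ^ e *
      (1 - ε) ^ r * PM k n r

open Finset

namespace VRL

/-- partial products `∏_{j<t} (1 - 2^{-(m+1+j)})` -/
noncomputable def Rp (m t : ℕ) : ℝ := ∏ j ∈ Finset.range t, (1 - (1/2 : ℝ) ^ (m + 1 + j))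

lemma half_pow_le_one (i : ℕ) : (1/2 : ℝ) ^ i ≤ 1 :=
  pow_le_one₀ (by norm_num) (by norm_num)

lemma half_pow_pos (i : ℕ) : (0:ℝ) < (1/2 : ℝ) ^ i := by positivity

lemma Rp_nonneg (m t : ℕ) : 0 ≤ Rp m t := by
  apply Finset.prod_nonneg
  intro j hj
  have h := half_pow_le_one (m + 1 + j)
  linarith

lemma Rp_le_one (m t : ℕ) : Rp m t ≤ 1 := by
  apply Finset.prod_le_one
  · intro j hj
    have h := half_pow_le_one (m + 1 + j)
    linarith
  · intro j hj
    have h := half_pow_pos (m + 1 + j)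
    linarith

lemma Rp_succ (m t : ℕ) : Rp m (t + 1) = Rp m t * (1 - (1/2:ℝ) ^ (m + 1 + t)) :=
  Finset.prod_range_succ _ _

lemma Rp_succ' (m t : ℕ) : Rp m (t + 1) = (1 - (1/2:ℝ) ^ (m + 1)) * Rp (m+1) t := by
  rw [Rp, Finset.prod_range_succ']
  simp only [Rp, add_zero]
  rw [mul_comm]
  congr 1
  apply Finset.prod_congr rfl
  intro j hj
  ring_nf

lemma Rp_antitone (m : ℕ) : Antitone (Rp m) := by
  apply antitone_nat_of_succ_le
  intro t
  rw [Rp_succ]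
  have h1 := Rp_nonneg m t
  have h2 := half_pow_pos (m + 1 + t)
  have h3 := Rp_le_one m t
  nlinarith

/-- `∏ (1-aⱼ) ≥ 1 - ∑ aⱼ` -/
lemma prod_one_sub_ge (t : ℕ) (f : ℕ → ℝ) (h0 : ∀ j, 0 ≤ f j) (h1 : ∀ j, f j ≤ 1) :
    1 - ∑ j ∈ Finset.range t, f j ≤ ∏ j ∈ Finset.range t, (1 - f j) := by
  induction t with
  | zero => simp
  | succ t ih =>
      rw [Finset.prod_range_succ, Finset.sum_range_succ]
      have hs : 0 ≤ ∑ j ∈ Finset.range t, f j := Finset.sum_nonneg fun j _ => h0 j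
      have hp : ∏ j ∈ Finset.range t, (1 - f j) ≤ 1 := by
        apply Finset.prod_le_one
        · intro j hj; linarith [h1 j]
        · intro j hj; linarith [h0 j]
      nlinarith [h0 t, h1 t]

lemma geom_partial_sum (i t : ℕ) :
    ∑ j ∈ Finset.range t, (1/2:ℝ) ^ (i + 1 + j) ≤ (1/2:ℝ) ^ i := by
  have h : ∀ j ∈ Finset.range t, (1/2:ℝ) ^ (i + 1 + j) = (1/2:ℝ)^(i+1) * (1/2:ℝ)^j := by
    intro j hj; rw [← pow_add]
  rw [Finset.sum_congr rfl h, ← Finset.mul_sum]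
  have hg : ∑ j ∈ Finset.range t, (1/2:ℝ)^j ≤ 2 := by
    simpa using sum_geometric_two_le t
  calc (1/2:ℝ)^(i+1) * ∑ j ∈ Finset.range t, (1/2:ℝ)^j ≤ (1/2:ℝ)^(i+1) * 2 := by
        apply mul_le_mul_of_nonneg_left hg (le_of_lt (half_pow_pos (i+1)))
    _ = (1/2:ℝ)^i := by rw [pow_succ]; ring

lemma Rp_ge (m t : ℕ) : 1 - (1/2:ℝ) ^ m ≤ Rp m t := by
  calc 1 - (1/2:ℝ)^m ≤ 1 - ∑ j ∈ Finset.range t, (1/2:ℝ)^(m+1+j) := by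
        linarith [geom_partial_sum m t]
    _ ≤ Rp m t := prod_one_sub_ge t _ (fun j => le_of_lt (half_pow_pos _))
        (fun j => half_pow_le_one _)

lemma Rp_ge_quarter (m t : ℕ) : (1/4 : ℝ) ≤ Rp m t := by
  cases t with
  | zero => norm_num [Rp]
  | succ t =>
      rw [Rp_succ']
      have h1 : (1 - (1/2:ℝ)^(m+1)) ≤ Rp (m+1) t := Rp_ge (m+1) t
      have h2 : (1/2:ℝ)^(m+1) ≤ (1/2)^1 :=
        pow_le_pow_of_le_one (by norm_num) (by norm_num) (by omega)
      norm_num at h2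
      nlinarith

/-- the limiting product `Q m = ∏_{j≥m+1}(1-2^{-j})` -/
noncomputable def Q (m : ℕ) : ℝ := ⨅ t, Rp m t

lemma Q_tendsto (m : ℕ) : Tendsto (Rp m) atTop (nhds (Q m)) := by
  apply tendsto_atTop_ciInf (Rp_antitone m)
  exact ⟨0, by rintro x ⟨t, rfl⟩; exact Rp_nonneg m t⟩

lemma Q_le_Rp (m t : ℕ) : Q m ≤ Rp m t :=
  ciInf_le ⟨0, by rintro x ⟨t, rfl⟩; exact Rp_nonneg m t⟩ t

lemma Q_ge_quarter (m : ℕ) : (1/4 : ℝ) ≤ Q m := le_ciInf fun t => Rp_ge_quarter m t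

lemma Q_pos (m : ℕ) : 0 < Q m := lt_of_lt_of_le (by norm_num) (Q_ge_quarter m)

lemma Q_ge (m : ℕ) : 1 - (1/2:ℝ)^m ≤ Q m := le_ciInf fun t => Rp_ge m t

lemma Q_le_one (m : ℕ) : Q m ≤ 1 := by
  have := Q_le_Rp m 0
  simpa [Rp] using this

lemma Q_rec (m : ℕ) : Q m = (1 - (1/2:ℝ)^(m+1)) * Q (m+1) := by
  have h1 : Tendsto (fun t => Rp m (t+1)) atTop (nhds (Q m)) :=
    (Q_tendsto m).comp (tendsto_add_atTop_nat 1)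
  have h2 : Tendsto (fun t => (1 - (1/2:ℝ)^(m+1)) * Rp (m+1) t) atTop
      (nhds ((1 - (1/2:ℝ)^(m+1)) * Q (m+1))) := (Q_tendsto (m+1)).const_mul _
  have h3 : (fun t => Rp m (t+1)) = fun t => (1 - (1/2:ℝ)^(m+1)) * Rp (m+1) t := by
    funext t; exact Rp_succ' m t
  rw [h3] at h1
  exact tendsto_nhds_unique h1 h2

lemma Q_tendsto_one : Tendsto Q atTop (nhds 1) := by
  have h1 : Tendsto (fun m : ℕ => 1 - (1/2:ℝ)^m) atTop (nhds 1) := by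
    have := tendsto_pow_atTop_nhds_zero_of_lt_one (by norm_num : (0:ℝ) ≤ 1/2) (by norm_num : (1/2:ℝ) < 1)
    simpa using (tendsto_const_nhds (x := (1:ℝ))).sub this
  exact tendsto_of_tendsto_of_tendsto_of_le_of_le h1 tendsto_const_nhds Q_ge Q_le_one

/-- `p m = 2^{-m} Q m`, the limiting pmf of the overhead -/
noncomputable def pp (m : ℕ) : ℝ := (1/2:ℝ)^m * Q m

lemma pp_pos (m : ℕ) : 0 < pp m := mul_pos (half_pow_pos m) (Q_pos m)

lemma pp_le (m : ℕ) : pp m ≤ (1/2:ℝ)^m := by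
  have := Q_le_one m
  have h := half_pow_pos m
  calc pp m = (1/2:ℝ)^m * Q m := rfl
    _ ≤ (1/2:ℝ)^m * 1 := by nlinarith
    _ = (1/2:ℝ)^m := mul_one _

lemma pp_rec (m : ℕ) : (1 - (1/2:ℝ)^(m+1)) * pp (m+1) = (1/2) * pp m := by
  unfold pp
  rw [Q_rec m]
  ring

lemma pp_partial_sum (M : ℕ) : ∑ m ∈ Finset.range (M+1), pp m = Q M := by
  induction M with
  | zero => simp [pp]
  | succ M ih =>
      rw [Finset.sum_range_succ, ih]
      have h := Q_rec M
      unfold pp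
      rw [h]
      ring

lemma pp_summable : Summable pp := by
  apply Summable.of_nonneg_of_le (fun m => le_of_lt (pp_pos m)) pp_le
  exact summable_geometric_of_lt_one (by norm_num) (by norm_num)

lemma pp_tsum : ∑' m, pp m = 1 := by
  have h1 : Tendsto (fun M => ∑ m ∈ Finset.range M, pp m) atTop (nhds (∑' m, pp m)) :=
    pp_summable.hasSum.tendsto_sum_nat
  have h2 : Tendsto (fun M => ∑ m ∈ Finset.range (M+1), pp m) atTop (nhds (∑' m, pp m)) :=
    h1.comp (tendsto_add_atTop_nat 1)
  have h3 : Tendsto (fun M => ∑ m ∈ Finset.range (M+1), pp m) atTop (nhds 1) := by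
    simp only [pp_partial_sum]
    exact Q_tendsto_one
  exact tendsto_nhds_unique h2 h3

end VRL

namespace VRL

/-! ### Generating functions -/

noncomputable def g (z : ℝ) : ℝ := ∑' m : ℕ, pp m * z ^ m
noncomputable def g1 (z : ℝ) : ℝ := ∑' m : ℕ, ((m : ℝ) + 1) * pp (m+1) * z ^ m
noncomputable def g2 (z : ℝ) : ℝ := ∑' m : ℕ, ((m : ℝ) + 2) * ((m : ℝ) + 1) * pp (m+2) * z ^ m

lemma summable_quad_geo : Summable (fun m : ℕ => ((m:ℝ)+2) * ((m:ℝ)+1) * (1/2:ℝ)^m) := by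
  have h2 := summable_pow_mul_geometric_of_norm_lt_one (R := ℝ) 2 (r := 1/2) (by norm_num)
  have h1 := summable_pow_mul_geometric_of_norm_lt_one (R := ℝ) 1 (r := 1/2) (by norm_num)
  have h0 : Summable (fun m : ℕ => (1/2:ℝ)^m) :=
    summable_geometric_of_lt_one (by norm_num) (by norm_num)
  have := (h2.add ((h1.mul_left 3).add (h0.mul_left 2)))
  apply this.congr
  intro m
  ring

lemma pp_z_le (z : ℝ) (hz0 : 0 ≤ z) (hz1 : z ≤ 1) (m : ℕ) :
    pp m * z ^ m ≤ (1/2:ℝ)^m := by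
  have h1 : z ^ m ≤ 1 := pow_le_one₀ hz0 hz1
  have h2 : 0 ≤ z ^ m := pow_nonneg hz0 m
  have := pp_le m
  have := pp_pos m
  nlinarith

lemma summable_g (z : ℝ) (hz0 : 0 ≤ z) (hz1 : z ≤ 1) : Summable (fun m => pp m * z ^ m) := by
  apply Summable.of_nonneg_of_le
    (fun m => mul_nonneg (pp_pos m).le (pow_nonneg hz0 m)) (pp_z_le z hz0 hz1)
  exact summable_geometric_of_lt_one (by norm_num) (by norm_num)

lemma summable_g1 (z : ℝ) (hz0 : 0 ≤ z) (hz1 : z ≤ 1) :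
    Summable (fun m : ℕ => ((m : ℝ) + 1) * pp (m+1) * z ^ m) := by
  apply Summable.of_nonneg_of_le
    (fun m => mul_nonneg (mul_nonneg (by positivity) (pp_pos (m+1)).le) (pow_nonneg hz0 m))
    (fun m => ?_) summable_quad_geo
  have h1 : z ^ m ≤ 1 := pow_le_one₀ hz0 hz1
  have h2 : 0 ≤ z ^ m := pow_nonneg hz0 m
  have h3 := pp_le (m+1)
  have h4 := pp_pos (m+1)
  have h5 : (1/2:ℝ)^(m+1) ≤ (1/2)^m := by
    apply pow_le_pow_of_le_one (by norm_num) (by norm_num) (by omega)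
  have hm : (0:ℝ) ≤ (m:ℝ) := Nat.cast_nonneg m
  have h55 : pp (m+1) * z ^ m ≤ (1/2:ℝ)^m := by nlinarith
  have h6 : ((m:ℝ)+1) * (pp (m+1) * z ^ m) ≤ ((m:ℝ)+1) * (1/2:ℝ)^m :=
    mul_le_mul_of_nonneg_left h55 (by linarith)
  have h7 : ((m:ℝ)+1) * (1/2:ℝ)^m ≤ ((m:ℝ)+2) * (((m:ℝ)+1) * (1/2:ℝ)^m) := by
    have h8 := half_pow_pos m
    have h9 : (0:ℝ) ≤ ((m:ℝ)+1) * (1/2:ℝ)^m := by positivity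
    nlinarith
  calc ((m:ℝ)+1) * pp (m+1) * z ^ m = ((m:ℝ)+1) * (pp (m+1) * z ^ m) := by ring
    _ ≤ ((m:ℝ)+1) * (1/2:ℝ)^m := h6
    _ ≤ ((m:ℝ)+2) * (((m:ℝ)+1) * (1/2:ℝ)^m) := h7
    _ = ((m:ℝ)+2) * ((m:ℝ)+1) * (1/2:ℝ)^m := by ring

lemma summable_g2 (z : ℝ) (hz0 : 0 ≤ z) (hz1 : z ≤ 1) :
    Summable (fun m : ℕ => ((m : ℝ) + 2) * ((m : ℝ) + 1) * pp (m+2) * z ^ m) := by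
  apply Summable.of_nonneg_of_le
    (fun m => mul_nonneg (mul_nonneg (by positivity) (pp_pos (m+2)).le) (pow_nonneg hz0 m))
    (fun m => ?_) summable_quad_geo
  have h1 : z ^ m ≤ 1 := pow_le_one₀ hz0 hz1
  have h2 : 0 ≤ z ^ m := pow_nonneg hz0 m
  have h3 := pp_le (m+2)
  have h4 := pp_pos (m+2)
  have h5 : (1/2:ℝ)^(m+2) ≤ (1/2)^m := by
    apply pow_le_pow_of_le_one (by norm_num) (by norm_num) (by omega)
  have hm : (0:ℝ) ≤ (m:ℝ) := Nat.cast_nonneg m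
  have h55 : pp (m+2) * z ^ m ≤ (1/2:ℝ)^m := by nlinarith
  have h9 : (0:ℝ) ≤ ((m:ℝ)+2) * ((m:ℝ)+1) := by positivity
  calc ((m:ℝ)+2) * ((m:ℝ)+1) * pp (m+2) * z ^ m
      = ((m:ℝ)+2) * ((m:ℝ)+1) * (pp (m+2) * z ^ m) := by ring
    _ ≤ ((m:ℝ)+2) * ((m:ℝ)+1) * (1/2:ℝ)^m := mul_le_mul_of_nonneg_left h55 h9

lemma g_pos_lb (z : ℝ) (hz0 : 0 ≤ z) (hz1 : z ≤ 1) : (1/4 : ℝ) ≤ g z := by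
  have hs := summable_g z hz0 hz1
  have h0 : pp 0 * z ^ 0 ≤ g z := Summable.le_tsum hs 0 (fun i _ => mul_nonneg (pp_pos i).le (pow_nonneg hz0 i))
  have : pp 0 = Q 0 := by simp [pp]
  have := Q_ge_quarter 0
  simp only [pow_zero, mul_one] at h0
  linarith [this]

lemma g_le_one (z : ℝ) (hz0 : 0 ≤ z) (hz1 : z ≤ 1) : g z ≤ 1 := by
  have hs := summable_g z hz0 hz1
  have hle : ∀ m : ℕ, pp m * z ^ m ≤ pp m := by
    intro m
    have h1 : z ^ m ≤ 1 := pow_le_one₀ hz0 hz1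
    have h2 : 0 ≤ z ^ m := pow_nonneg hz0 m
    nlinarith [pp_pos m]
  have h := Summable.tsum_le_tsum hle hs pp_summable
  rw [pp_tsum] at h
  exact h

lemma g_nonneg (z : ℝ) (hz0 : 0 ≤ z) (hz1 : z ≤ 1) : 0 ≤ g z :=
  le_trans (by norm_num) (g_pos_lb z hz0 hz1)

lemma g1_nonneg (z : ℝ) (hz0 : 0 ≤ z) (hz1 : z ≤ 1) : 0 ≤ g1 z :=
  tsum_nonneg fun m => mul_nonneg (mul_nonneg (by positivity) (pp_pos (m+1)).le)
    (pow_nonneg hz0 m)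

lemma g2_nonneg (z : ℝ) (hz0 : 0 ≤ z) (hz1 : z ≤ 1) : 0 ≤ g2 z :=
  tsum_nonneg fun m => mul_nonneg (mul_nonneg (by positivity) (pp_pos (m+2)).le)
    (pow_nonneg hz0 m)

lemma g1_le (z : ℝ) (hz0 : 0 ≤ z) (hz1 : z ≤ 1) : g1 z ≤ g1 1 := by
  apply Summable.tsum_le_tsum _ (summable_g1 z hz0 hz1) (summable_g1 1 (by norm_num) (by norm_num))
  intro m
  have h1 : z ^ m ≤ 1 ^ m := pow_le_pow_left₀ hz0 hz1 m
  have h9 : (0:ℝ) ≤ ((m:ℝ)+1) * pp (m+1) := mul_nonneg (by positivity) (pp_pos _).le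
  calc ((m:ℝ)+1) * pp (m+1) * z ^ m = ((m:ℝ)+1) * pp (m+1) * z ^ m := rfl
    _ ≤ ((m:ℝ)+1) * pp (m+1) * 1 ^ m := by
        apply mul_le_mul_of_nonneg_left h1 h9

lemma g2_le (z : ℝ) (hz0 : 0 ≤ z) (hz1 : z ≤ 1) : g2 z ≤ g2 1 := by
  apply Summable.tsum_le_tsum _ (summable_g2 z hz0 hz1) (summable_g2 1 (by norm_num) (by norm_num))
  intro m
  have h1 : z ^ m ≤ 1 ^ m := pow_le_pow_left₀ hz0 hz1 m
  have h9 : (0:ℝ) ≤ ((m:ℝ)+2) * ((m:ℝ)+1) * pp (m+2) :=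
    mul_nonneg (by positivity) (pp_pos _).le
  exact mul_le_mul_of_nonneg_left h1 h9

lemma half_pow_mem (z : ℝ) (hz0 : 0 ≤ z) (hz1 : z ≤ 1) : 0 ≤ z/2 ∧ z/2 ≤ 1 :=
  ⟨by linarith, by linarith⟩

/-- key coefficient identity -/
lemma pp_key (m : ℕ) : (1/2:ℝ)^(m+1) * pp (m+1) = pp (m+1) - 1/2 * pp m := by
  linear_combination -(pp_rec m)

/-- functional equation (I): `g(z/2) = (1-z/2) g(z)` -/
lemma gI (z : ℝ) (hz0 : 0 ≤ z) (hz1 : z ≤ 1) : g (z/2) = (1 - z/2) * g z := by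
  obtain ⟨hz20, hz21⟩ := half_pow_mem z hz0 hz1
  have hs := summable_g z hz0 hz1
  have hs2 := summable_g (z/2) hz20 hz21
  have hshift : Summable (fun m => pp (m+1) * z^(m+1)) := by
    have := (summable_nat_add_iff 1).2 hs
    exact this
  have hmul : Summable (fun m => 1/2 * pp m * z^(m+1)) := by
    apply (hs.mul_left (z/2)).congr
    intro m; ring
  have e2 : g z = pp 0 + ∑' m, pp (m+1) * z^(m+1) := by
    rw [g, Summable.tsum_eq_zero_add hs]; simp
  have e3 : (z/2) * g z = ∑' m, 1/2 * pp m * z^(m+1) := by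
    rw [g, ← tsum_mul_left]
    apply tsum_congr; intro m; ring
  calc g (z/2) = pp 0 * (z/2)^0 + ∑' m, pp (m+1) * (z/2)^(m+1) := by
        rw [g, Summable.tsum_eq_zero_add hs2]
    _ = pp 0 + ∑' m, (pp (m+1) * z^(m+1) - 1/2 * pp m * z^(m+1)) := by
        rw [pow_zero, mul_one]
        congr 1
        apply tsum_congr; intro m
        have hk := pp_key m
        have hzp : (z/2)^(m+1) = (1/2:ℝ)^(m+1) * z^(m+1) := by
          rw [div_eq_mul_one_div z 2, mul_pow, mul_comm, one_div]
        rw [hzp]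
        linear_combination z^(m+1) * hk
    _ = pp 0 + (∑' m, pp (m+1) * z^(m+1) - ∑' m, 1/2 * pp m * z^(m+1)) := by
        rw [Summable.tsum_sub hshift hmul]
    _ = (1 - z/2) * g z := by rw [sub_mul, one_mul, e3, e2]; ring


/-- functional equation (II) (rearranged): `½g1(z/2) + (z/2)g1(z) + ½g(z) = g1(z)` -/
lemma gII (z : ℝ) (hz0 : 0 ≤ z) (hz1 : z ≤ 1) :
    (1/2) * g1 (z/2) + (z/2) * g1 z + (1/2) * g z = g1 z := by
  obtain ⟨hz20, hz21⟩ := half_pow_mem z hz0 hz1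
  have hsg := summable_g z hz0 hz1
  have hs1 := summable_g1 z hz0 hz1
  have hs1h := summable_g1 (z/2) hz20 hz21
  have hsh1 : Summable (fun m : ℕ => ((m:ℝ)+1+1) * pp (m+1+1) * (z/2)^(m+1)) := by
    have := (summable_nat_add_iff 1).2 hs1h
    apply this.congr; intro m; push_cast; ring
  have hsh2 : Summable (fun m : ℕ => (z/2) * (((m:ℝ)+1) * pp (m+1) * z^m)) := hs1.mul_left _
  have hsh3 : Summable (fun m => 1/2 * (pp (m+1) * z^(m+1))) := by
    have := ((summable_nat_add_iff 1).2 hsg).mul_left (1/2:ℝ)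
    exact this
  have hsh4 : Summable (fun m : ℕ => ((m:ℝ)+1+1) * pp (m+1+1) * z^(m+1)) := by
    have := (summable_nat_add_iff 1).2 hs1
    apply this.congr; intro m; push_cast; ring
  have e1 : g1 (z/2) = pp 1 + ∑' m : ℕ, ((m:ℝ)+1+1) * pp (m+1+1) * (z/2)^(m+1) := by
    rw [g1, Summable.tsum_eq_zero_add hs1h]
    norm_num
  have e2 : (z/2) * g1 z = ∑' m : ℕ, (z/2) * (((m:ℝ)+1) * pp (m+1) * z^m) := by
    rw [g1, ← tsum_mul_left]
  have e3 : g z = pp 0 + ∑' m, pp (m+1) * z^(m+1) := by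
    rw [g, Summable.tsum_eq_zero_add hsg]; simp
  have e4 : g1 z = pp 1 + ∑' m : ℕ, ((m:ℝ)+1+1) * pp (m+1+1) * z^(m+1) := by
    rw [g1, Summable.tsum_eq_zero_add hs1]
    norm_num
  rw [e1, e2, e3, e4, mul_add, mul_add]
  have key : ∑' m : ℕ, 1/2 * (((m:ℝ)+1+1) * pp (m+1+1) * (z/2)^(m+1))
      + ∑' m : ℕ, (z/2) * (((m:ℝ)+1) * pp (m+1) * z^m)
      + ∑' m, 1/2 * (pp (m+1) * z^(m+1))
      = ∑' m : ℕ, ((m:ℝ)+1+1) * pp (m+1+1) * z^(m+1) := by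
    rw [← Summable.tsum_add (hsh1.mul_left _) hsh2, ← Summable.tsum_add ((hsh1.mul_left _).add hsh2) hsh3]
    apply tsum_congr; intro m
    have hzp : (z/2)^(m+1) = (1/2:ℝ)^(m+1) * z^(m+1) := by
      rw [div_eq_mul_one_div z 2, mul_pow, mul_comm, one_div]
    rw [hzp]
    have hr := pp_rec (m+1)
    linear_combination (-(((m:ℝ)+2) * z^(m+1))) * hr
  have hhead : (1/2:ℝ) * pp 1 + 1/2 * pp 0 = pp 1 := by
    have := pp_rec 0
    norm_num at this
    linarith
  rw [← tsum_mul_left (a := (1/2:ℝ)), ← tsum_mul_left (a := (1/2:ℝ))] at *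
  linarith [key]

/-- functional equation (III) (rearranged) -/
lemma gIII (z : ℝ) (hz0 : 0 ≤ z) (hz1 : z ≤ 1) :
    (1/4) * g2 (z/2) + (z/2) * g2 z + g1 z = g2 z := by
  obtain ⟨hz20, hz21⟩ := half_pow_mem z hz0 hz1
  have hs1 := summable_g1 z hz0 hz1
  have hs2 := summable_g2 z hz0 hz1
  have hs2h := summable_g2 (z/2) hz20 hz21
  have hsh1 : Summable (fun m : ℕ => ((m:ℝ)+1+2) * ((m:ℝ)+1+1) * pp (m+1+2) * (z/2)^(m+1)) := by
    have := (summable_nat_add_iff 1).2 hs2h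
    apply this.congr; intro m; push_cast; ring
  have hsh2 : Summable (fun m : ℕ => (z/2) * (((m:ℝ)+2) * ((m:ℝ)+1) * pp (m+2) * z^m)) :=
    hs2.mul_left _
  have hsh3 : Summable (fun m : ℕ => ((m:ℝ)+1+1) * pp (m+1+1) * z^(m+1)) := by
    have := (summable_nat_add_iff 1).2 hs1
    apply this.congr; intro m; push_cast; ring
  have hsh4 : Summable (fun m : ℕ => ((m:ℝ)+1+2) * ((m:ℝ)+1+1) * pp (m+1+2) * z^(m+1)) := by
    have := (summable_nat_add_iff 1).2 hs2
    apply this.congr; intro m; push_cast; ring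
  have e1 : g2 (z/2) = 2 * pp 2 + ∑' m : ℕ, ((m:ℝ)+1+2) * ((m:ℝ)+1+1) * pp (m+1+2) * (z/2)^(m+1) := by
    rw [g2, Summable.tsum_eq_zero_add hs2h]
    norm_num
  have e2 : (z/2) * g2 z = ∑' m : ℕ, (z/2) * (((m:ℝ)+2) * ((m:ℝ)+1) * pp (m+2) * z^m) := by
    rw [g2, ← tsum_mul_left]
  have e3 : g1 z = pp 1 + ∑' m : ℕ, ((m:ℝ)+1+1) * pp (m+1+1) * z^(m+1) := by
    rw [g1, Summable.tsum_eq_zero_add hs1]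
    norm_num
  have e4 : g2 z = 2 * pp 2 + ∑' m : ℕ, ((m:ℝ)+1+2) * ((m:ℝ)+1+1) * pp (m+1+2) * z^(m+1) := by
    rw [g2, Summable.tsum_eq_zero_add hs2]
    norm_num
  rw [e1, e2, e3, e4, mul_add]
  have key : ∑' m : ℕ, 1/4 * (((m:ℝ)+1+2) * ((m:ℝ)+1+1) * pp (m+1+2) * (z/2)^(m+1))
      + ∑' m : ℕ, (z/2) * (((m:ℝ)+2) * ((m:ℝ)+1) * pp (m+2) * z^m)
      + ∑' m : ℕ, ((m:ℝ)+1+1) * pp (m+1+1) * z^(m+1)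
      = ∑' m : ℕ, ((m:ℝ)+1+2) * ((m:ℝ)+1+1) * pp (m+1+2) * z^(m+1) := by
    rw [← Summable.tsum_add (hsh1.mul_left _) hsh2, ← Summable.tsum_add ((hsh1.mul_left _).add hsh2) hsh3]
    apply tsum_congr; intro m
    have hzp : (z/2)^(m+1) = (1/2:ℝ)^(m+1) * z^(m+1) := by
      rw [div_eq_mul_one_div z 2, mul_pow, mul_comm, one_div]
    rw [hzp]
    have hr := pp_rec (m+2)
    linear_combination (-(((m:ℝ)+3) * ((m:ℝ)+2) * z^(m+1))) * hr
  have hhead : (1/4:ℝ) * (2 * pp 2) + pp 1 = 2 * pp 2 := by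
    have := pp_rec 1
    norm_num at this
    linarith
  rw [← tsum_mul_left (a := (1/4:ℝ))] at *
  linarith [key]


/-! ### iteration at the points `z = (1/2)^N` -/

lemma qpow_mem (N : ℕ) : 0 ≤ (1/2:ℝ)^N ∧ (1/2:ℝ)^N ≤ 1 :=
  ⟨(half_pow_pos N).le, half_pow_le_one N⟩

lemma qpow_half (N : ℕ) : ((1/2:ℝ)^N) / 2 = (1/2:ℝ)^(N+1) := by
  rw [pow_succ]; ring

lemma gsI (N : ℕ) : g ((1/2:ℝ)^(N+1)) = (1 - (1/2:ℝ)^(N+1)) * g ((1/2:ℝ)^N) := by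
  have := gI ((1/2:ℝ)^N) (qpow_mem N).1 (qpow_mem N).2
  rwa [qpow_half] at this

lemma gsII (N : ℕ) : (1/2) * g1 ((1/2:ℝ)^(N+1)) + (1/2:ℝ)^(N+1) * g1 ((1/2:ℝ)^N)
    + (1/2) * g ((1/2:ℝ)^N) = g1 ((1/2:ℝ)^N) := by
  have := gII ((1/2:ℝ)^N) (qpow_mem N).1 (qpow_mem N).2
  rwa [qpow_half] at this

lemma gsIII (N : ℕ) : (1/4) * g2 ((1/2:ℝ)^(N+1)) + (1/2:ℝ)^(N+1) * g2 ((1/2:ℝ)^N)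
    + g1 ((1/2:ℝ)^N) = g2 ((1/2:ℝ)^N) := by
  have := gIII ((1/2:ℝ)^N) (qpow_mem N).1 (qpow_mem N).2
  rwa [qpow_half] at this

lemma g_ne (N : ℕ) : g ((1/2:ℝ)^N) ≠ 0 := by
  have := g_pos_lb ((1/2:ℝ)^N) (qpow_mem N).1 (qpow_mem N).2
  linarith

lemma one_sub_q_pos (N : ℕ) : 0 < 1 - (1/2:ℝ)^(N+1) := by
  have h : (1/2:ℝ)^(N+1) ≤ (1/2)^1 :=
    pow_le_pow_of_le_one (by norm_num) (by norm_num) (by omega)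
  norm_num at h; linarith

noncomputable def phi (N : ℕ) : ℝ := g1 ((1/2:ℝ)^N) / g ((1/2:ℝ)^N)
noncomputable def Wf (N : ℕ) : ℝ :=
  (g2 ((1/2:ℝ)^N) * g ((1/2:ℝ)^N) - (g1 ((1/2:ℝ)^N))^2) / (g ((1/2:ℝ)^N))^2

lemma g1_shift (N : ℕ) : g1 ((1/2:ℝ)^(N+1))
    = 2 * (1 - (1/2:ℝ)^(N+1)) * g1 ((1/2:ℝ)^N) - g ((1/2:ℝ)^N) := by
  linear_combination 2 * gsII N

lemma g2_shift (N : ℕ) : g2 ((1/2:ℝ)^(N+1))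
    = 4 * ((1 - (1/2:ℝ)^(N+1)) * g2 ((1/2:ℝ)^N) - g1 ((1/2:ℝ)^N)) := by
  linear_combination 4 * gsIII N

lemma phi_rec (N : ℕ) :
    phi N = (1/2) * phi (N+1) + (1/2) / (1 - (1/2:ℝ)^(N+1)) := by
  have h1 := g_ne N
  have h2 := (one_sub_q_pos N).ne'
  unfold phi
  rw [g1_shift N, gsI N]
  set a := g ((1/2:ℝ)^N) with ha
  set b := g1 ((1/2:ℝ)^N) with hb
  set u := 1 - (1/2:ℝ)^(N+1) with hu
  field_simp
  ring

lemma Wf_rec (N : ℕ) :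
    Wf N = (1/4) * Wf (N+1) + (1/4) / (1 - (1/2:ℝ)^(N+1))^2 := by
  have h1 := g_ne N
  have h2 := (one_sub_q_pos N).ne'
  unfold Wf
  rw [g1_shift N, g2_shift N, gsI N]
  set a := g ((1/2:ℝ)^N) with ha
  set b := g1 ((1/2:ℝ)^N) with hb
  set c := g2 ((1/2:ℝ)^N) with hc
  set u := 1 - (1/2:ℝ)^(N+1) with hu
  field_simp
  ring

lemma phi_unroll (N : ℕ) :
    phi 0 = (∑ i ∈ Finset.range N, (1/2:ℝ)^(i+1) / (1 - (1/2:ℝ)^(i+1)))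
      + (1/2:ℝ)^N * phi N := by
  induction N with
  | zero => simp
  | succ N ih =>
      rw [ih, Finset.sum_range_succ, phi_rec N, pow_succ]
      ring

lemma Wf_unroll (N : ℕ) :
    Wf 0 = (∑ i ∈ Finset.range N, (1/4:ℝ)^(i+1) / (1 - (1/2:ℝ)^(i+1))^2)
      + (1/4:ℝ)^N * Wf N := by
  induction N with
  | zero => simp
  | succ N ih =>
      rw [ih, Finset.sum_range_succ, Wf_rec N, pow_succ]
      ring

lemma term_eq (i : ℕ) :
    (1/2:ℝ)^(i+1) / (1 - (1/2:ℝ)^(i+1)) = 1 / ((2:ℝ)^(i+1) - 1) := by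
  have h1 := one_sub_q_pos i
  have h2 : (0:ℝ) < (2:ℝ)^(i+1) - 1 := by
    have : (1:ℝ) < 2^(i+1) := one_lt_pow₀ (by norm_num) (by omega)
    linarith
  rw [div_eq_div_iff h1.ne' h2.ne']
  have h3 : (1/2:ℝ)^(i+1) * (2:ℝ)^(i+1) = 1 := by
    rw [← mul_pow]; norm_num
  nlinarith

lemma term_eq2 (i : ℕ) :
    (1/4:ℝ)^(i+1) / (1 - (1/2:ℝ)^(i+1))^2 = 1 / ((2:ℝ)^(i+1) - 1)^2 := by
  have h : (1/4:ℝ)^(i+1) = ((1/2:ℝ)^(i+1))^2 := by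
    rw [← pow_mul, pow_mul']; norm_num
  rw [h, ← div_pow, term_eq i, div_pow, one_pow]

lemma c0_term_le (i : ℕ) : 1 / ((2:ℝ)^(i+1) - 1) ≤ (1/2:ℝ)^i := by
  have h2 : (0:ℝ) < (2:ℝ)^(i+1) - 1 := by
    have : (1:ℝ) < 2^(i+1) := one_lt_pow₀ (by norm_num) (by omega)
    linarith
  rw [div_le_iff₀ h2]
  have h3 : (1/2:ℝ)^i * (2:ℝ)^i = 1 := by rw [← mul_pow]; norm_num
  have h4 : (2:ℝ)^(i+1) = 2 * (2:ℝ)^i := by rw [pow_succ]; ring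
  have h5 : (1:ℝ) ≤ (2:ℝ)^i := one_le_pow₀ (by norm_num)
  have h6 : (0:ℝ) < (1/2:ℝ)^i := half_pow_pos i
  nlinarith

lemma c0_term_pos (i : ℕ) : 0 < 1 / ((2:ℝ)^(i+1) - 1) := by
  have h2 : (0:ℝ) < (2:ℝ)^(i+1) - 1 := by
    have : (1:ℝ) < 2^(i+1) := one_lt_pow₀ (by norm_num) (by omega)
    linarith
  positivity

lemma c0_summable : Summable (fun i : ℕ => 1 / ((2:ℝ)^(i+1) - 1)) := by
  apply Summable.of_nonneg_of_le (fun i => (c0_term_pos i).le) c0_term_le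
  exact summable_geometric_of_lt_one (by norm_num) (by norm_num)

lemma c1_term_le (i : ℕ) : 1 / ((2:ℝ)^(i+1) - 1)^2 ≤ (1/2:ℝ)^i := by
  have h2 : (1:ℝ) ≤ (2:ℝ)^(i+1) - 1 := by
    have : (2:ℝ)^1 ≤ 2^(i+1) := pow_le_pow_right₀ (by norm_num) (by omega)
    norm_num at this; linarith
  calc 1 / ((2:ℝ)^(i+1) - 1)^2 ≤ 1 / ((2:ℝ)^(i+1) - 1) := by
        apply div_le_div_of_nonneg_left (by norm_num) (by nlinarith)
        nlinarith
    _ ≤ (1/2:ℝ)^i := c0_term_le i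

lemma c1_summable : Summable (fun i : ℕ => 1 / ((2:ℝ)^(i+1) - 1)^2) := by
  apply Summable.of_nonneg_of_le (fun i => by positivity) c1_term_le
  exact summable_geometric_of_lt_one (by norm_num) (by norm_num)

lemma g_one : g 1 = 1 := by
  rw [g]
  simp only [one_pow, mul_one]
  exact pp_tsum

lemma phi_zero : phi 0 = g1 1 := by
  unfold phi
  rw [pow_zero, g_one]
  simp

lemma phi_nonneg (N : ℕ) : 0 ≤ phi N :=
  div_nonneg (g1_nonneg _ (qpow_mem N).1 (qpow_mem N).2)
    (g_nonneg _ (qpow_mem N).1 (qpow_mem N).2)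

lemma phi_le (N : ℕ) : phi N ≤ 4 * g1 1 := by
  unfold phi
  have h1 := g1_le ((1/2:ℝ)^N) (qpow_mem N).1 (qpow_mem N).2
  have h2 := g_pos_lb ((1/2:ℝ)^N) (qpow_mem N).1 (qpow_mem N).2
  have h3 := g1_nonneg ((1/2:ℝ)^N) (qpow_mem N).1 (qpow_mem N).2
  rw [div_le_iff₀ (by linarith)]
  nlinarith

lemma g1_one_eq : g1 1 = c₀ := by
  have hA : Tendsto (fun N => (∑ i ∈ Finset.range N, (1/2:ℝ)^(i+1) / (1 - (1/2:ℝ)^(i+1)))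
      + (1/2:ℝ)^N * phi N) atTop (nhds (c₀ + 0)) := by
    apply Tendsto.add
    · have : (fun N => ∑ i ∈ Finset.range N, (1/2:ℝ)^(i+1) / (1 - (1/2:ℝ)^(i+1)))
          = fun N => ∑ i ∈ Finset.range N, 1 / ((2:ℝ)^(i+1) - 1) := by
        funext N; exact Finset.sum_congr rfl fun i _ => term_eq i
      rw [this]
      exact c0_summable.hasSum.tendsto_sum_nat
    · apply squeeze_zero (fun N => mul_nonneg (half_pow_pos N).le (phi_nonneg N))
        (fun N => mul_le_mul_of_nonneg_left (phi_le N) (half_pow_pos N).le)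
      have : Tendsto (fun N : ℕ => (1/2:ℝ)^N * (4 * g1 1)) atTop (nhds (0 * (4 * g1 1))) := by
        apply Tendsto.mul_const
        exact tendsto_pow_atTop_nhds_zero_of_lt_one (by norm_num) (by norm_num)
      simpa using this
  have hB : Tendsto (fun _ : ℕ => phi 0) atTop (nhds (phi 0)) := tendsto_const_nhds
  have : phi 0 = c₀ + 0 := by
    apply tendsto_nhds_unique hB
    have heq : (fun _ : ℕ => phi 0) = (fun N => (∑ i ∈ Finset.range N,
        (1/2:ℝ)^(i+1) / (1 - (1/2:ℝ)^(i+1))) + (1/2:ℝ)^N * phi N) := by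
      funext N; exact phi_unroll N
    rw [heq]
    exact hA
  rw [← phi_zero, this, add_zero]

lemma Wf_zero : Wf 0 = g2 1 - c₀^2 := by
  unfold Wf
  rw [pow_zero, g_one, g1_one_eq]
  norm_num

lemma Wf_abs_le (N : ℕ) : |Wf N| ≤ 16 * g2 1 + 16 * (g1 1)^2 := by
  have m := qpow_mem N
  have h1 := g2_le ((1/2:ℝ)^N) m.1 m.2
  have h2 := g_pos_lb ((1/2:ℝ)^N) m.1 m.2
  have h3 := g1_nonneg ((1/2:ℝ)^N) m.1 m.2
  have h4 := g2_nonneg ((1/2:ℝ)^N) m.1 m.2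
  have h5 := g1_le ((1/2:ℝ)^N) m.1 m.2
  have h6 := g_le_one ((1/2:ℝ)^N) m.1 m.2
  have h7 := g1_nonneg 1 (by norm_num) (le_refl 1)
  have h8 := g2_nonneg 1 (by norm_num) (le_refl 1)
  unfold Wf
  set a := g ((1/2:ℝ)^N) with hadef
  set b := g1 ((1/2:ℝ)^N) with hbdef
  set c := g2 ((1/2:ℝ)^N) with hcdef
  have ha0 : (0:ℝ) < a := by linarith
  have ha216 : (1:ℝ) ≤ 16 * a^2 := by nlinarith
  have e1 : b^2 ≤ (g1 1)^2 := by nlinarith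
  have e2 : (g1 1)^2 * 1 ≤ (g1 1)^2 * (16 * a^2) :=
    mul_le_mul_of_nonneg_left ha216 (sq_nonneg _)
  have e3 : 0 ≤ c * a := mul_nonneg h4 ha0.le
  have e4 : c * a ≤ g2 1 * a := mul_le_mul_of_nonneg_right h1 ha0.le
  have e5 : g2 1 * a * 1 ≤ g2 1 * a * (4 * a) := by
    apply mul_le_mul_of_nonneg_left (by linarith) (mul_nonneg h8 ha0.le)
  have e6 : (0:ℝ) ≤ 16 * g2 1 * a^2 := by positivity
  rw [abs_le]
  constructor
  · rw [le_div_iff₀ (by positivity)]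
    nlinarith
  · rw [div_le_iff₀ (by positivity)]
    nlinarith

lemma g2_one_eq : g2 1 = c₀^2 + c₁ := by
  have hA : Tendsto (fun N => (∑ i ∈ Finset.range N, (1/4:ℝ)^(i+1) / (1 - (1/2:ℝ)^(i+1))^2)
      + (1/4:ℝ)^N * Wf N) atTop (nhds (c₁ + 0)) := by
    apply Tendsto.add
    · have : (fun N => ∑ i ∈ Finset.range N, (1/4:ℝ)^(i+1) / (1 - (1/2:ℝ)^(i+1))^2)
          = fun N => ∑ i ∈ Finset.range N, 1 / ((2:ℝ)^(i+1) - 1)^2 := by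
        funext N; exact Finset.sum_congr rfl fun i _ => term_eq2 i
      rw [this]
      exact c1_summable.hasSum.tendsto_sum_nat
    · have hb : ∀ N : ℕ, ‖(1/4:ℝ)^N * Wf N‖ ≤ (1/4:ℝ)^N * (16 * g2 1 + 16 * (g1 1)^2) := by
        intro N
        rw [Real.norm_eq_abs, abs_mul, abs_pow, show |(1/4:ℝ)| = 1/4 by norm_num]
        exact mul_le_mul_of_nonneg_left (Wf_abs_le N) (by positivity)
      have hz : Tendsto (fun N : ℕ => (1/4:ℝ)^N * (16 * g2 1 + 16 * (g1 1)^2)) atTop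
          (nhds 0) := by
        have h := tendsto_pow_atTop_nhds_zero_of_lt_one
          (by norm_num : (0:ℝ) ≤ 1/4) (by norm_num : (1/4:ℝ) < 1)
        simpa using h.mul_const (16 * g2 1 + 16 * (g1 1)^2)
      exact squeeze_zero_norm hb hz
  have hB : Tendsto (fun _ : ℕ => Wf 0) atTop (nhds (Wf 0)) := tendsto_const_nhds
  have hW : Wf 0 = c₁ + 0 := by
    apply tendsto_nhds_unique hB
    have heq : (fun _ : ℕ => Wf 0) = (fun N => (∑ i ∈ Finset.range N,
        (1/4:ℝ)^(i+1) / (1 - (1/2:ℝ)^(i+1))^2) + (1/4:ℝ)^N * Wf N) := by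
      funext N; exact Wf_unroll N
    rw [heq]
    exact hA
  have := Wf_zero
  rw [hW] at this
  linarith

/-! ### moments of the limit distribution -/

lemma summable_m_pp : Summable (fun m : ℕ => (m:ℝ) * pp m) := by
  apply Summable.of_nonneg_of_le (fun m => mul_nonneg (Nat.cast_nonneg m) (pp_pos m).le)
    (fun m => ?_) summable_quad_geo
  have := pp_le m
  have := pp_pos m
  have hm : (0:ℝ) ≤ (m:ℝ) := Nat.cast_nonneg m
  have h9 : (m:ℝ) ≤ ((m:ℝ)+2) * ((m:ℝ)+1) := by nlinarith
  have := half_pow_pos m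
  nlinarith

lemma summable_m2_pp : Summable (fun m : ℕ => (m:ℝ)^2 * pp m) := by
  apply Summable.of_nonneg_of_le (fun m => mul_nonneg (by positivity) (pp_pos m).le)
    (fun m => ?_) summable_quad_geo
  have := pp_le m
  have := pp_pos m
  have hm : (0:ℝ) ≤ (m:ℝ) := Nat.cast_nonneg m
  have h9 : (m:ℝ)^2 ≤ ((m:ℝ)+2) * ((m:ℝ)+1) := by nlinarith
  have := half_pow_pos m
  nlinarith

lemma moment1 : ∑' m : ℕ, (m:ℝ) * pp m = c₀ := by
  rw [Summable.tsum_eq_zero_add summable_m_pp]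
  rw [← g1_one_eq, g1]
  simp only [Nat.cast_zero, zero_mul, zero_add, one_pow, mul_one]
  apply tsum_congr; intro m
  push_cast
  ring

lemma moment2 : ∑' m : ℕ, (m:ℝ)^2 * pp m = c₀^2 + c₁ + c₀ := by
  have hsub : Summable (fun m : ℕ => (m:ℝ) * ((m:ℝ) - 1) * pp m) := by
    apply (summable_m2_pp.sub summable_m_pp).congr
    intro m; ring
  have key : ∑' m : ℕ, (m:ℝ) * ((m:ℝ) - 1) * pp m = c₀^2 + c₁ := by
    rw [Summable.tsum_eq_zero_add hsub, Summable.tsum_eq_zero_add ((summable_nat_add_iff 1).2 hsub)]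
    have hg2 : g2 1 = ∑' m : ℕ, ((m:ℝ)+2) * ((m:ℝ)+1) * pp (m+2) := by
      rw [g2]
      apply tsum_congr; intro m
      rw [one_pow, mul_one]
    rw [← g2_one_eq, hg2]
    norm_num
    apply tsum_congr; intro m
    rw [show m+1+1 = m+2 from rfl]
    push_cast
    ring
  have : ∑' m : ℕ, (m:ℝ)^2 * pp m
      = (∑' m : ℕ, (m:ℝ) * ((m:ℝ) - 1) * pp m) + ∑' m : ℕ, (m:ℝ) * pp m := by
    rw [← Summable.tsum_add hsub summable_m_pp]
    apply tsum_congr; intro m; ring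
  rw [this, key, moment1]


/-! ### negative binomial series -/

section NB

variable {x : ℝ} (r : ℕ)

lemma norm_x_lt (h0 : 0 ≤ x) (h1 : x < 1) : ‖x‖ < 1 := by
  rw [Real.norm_eq_abs, abs_of_nonneg h0]; exact h1

lemma choose_rewrite (hr : 1 ≤ r) (e : ℕ) :
    (r + e - 1).choose e = (e + (r-1)).choose (r-1) := by
  rw [show r + e - 1 = e + (r-1) by omega]
  have h := Nat.choose_symm (Nat.le_add_right e (r-1))
  rw [show e + (r-1) - e = r - 1 by omega] at h
  exact h.symm

lemma NB0 (hr : 1 ≤ r) (h0 : 0 ≤ x) (h1 : x < 1) :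
    HasSum (fun e : ℕ => ((r + e - 1).choose e : ℝ) * x ^ e) (1 / (1-x)^r) := by
  have h := hasSum_choose_mul_geometric_of_norm_lt_one (𝕜 := ℝ) (r-1) (norm_x_lt h0 h1)
  rw [show r - 1 + 1 = r by omega] at h
  apply h.congr_fun
  intro e
  rw [choose_rewrite r hr e]

lemma NB1 (hr : 1 ≤ r) (h0 : 0 ≤ x) (h1 : x < 1) :
    HasSum (fun e : ℕ => (e:ℝ) * ((r + e - 1).choose e : ℝ) * x ^ e)
      ((r:ℝ) * x / (1-x)^(r+1)) := by
  have h := hasSum_choose_mul_geometric_of_norm_lt_one (𝕜 := ℝ) r (norm_x_lt h0 h1)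
  have h2 := h.mul_left ((r:ℝ) * x)
  set f : ℕ → ℝ := fun e => (e:ℝ) * ((r + e - 1).choose e : ℝ) * x ^ e with hf
  have hshift : ∀ n : ℕ, f (n+1) = (r:ℝ) * x * (((n + r).choose r : ℝ) * x ^ n) := by
    intro n
    have hnat : (n+1) * (r + (n+1) - 1).choose (n+1) = r * ((n + r).choose r) := by
      rw [show r + (n+1) - 1 = r + n by omega]
      have h3 := Nat.choose_succ_right_eq (r + n) n
      rw [show r + n - n = r by omega] at h3
      have h4 := Nat.choose_symm (Nat.le_add_right n r)
      rw [show n + r - n = r by omega] at h4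
      rw [show (n:ℕ) + r = r + n by omega] at h4
      calc (n+1) * (r + n).choose (n+1) = (r+n).choose (n+1) * (n+1) := by ring
        _ = (r+n).choose n * r := h3
        _ = r * ((n + r).choose r) := by rw [← h4]; ring
    have : ((n:ℝ)+1) * ((r + (n+1) - 1).choose (n+1) : ℝ) = (r:ℝ) * ((n + r).choose r : ℝ) := by
      have := congrArg (fun t : ℕ => (t:ℝ)) hnat
      push_cast at this
      linarith
    simp only [hf]
    rw [pow_succ]
    push_cast
    linear_combination (x^n * x) * this
  have h3 : HasSum (fun n => f (n+1)) ((r:ℝ) * x / (1-x)^(r+1)) := by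
    have hh : HasSum (fun n => f (n+1)) ((r:ℝ) * x * (1 / (1-x)^(r+1))) :=
      h2.congr_fun (fun n => hshift n)
    rwa [show (r:ℝ) * x * (1 / (1-x)^(r+1)) = (r:ℝ) * x / (1-x)^(r+1) by
      rw [mul_one_div]] at hh
  have h4 := (hasSum_nat_add_iff (f := f) 1).1 h3
  simp only [Finset.range_one, Finset.sum_singleton] at h4
  have hf0 : f 0 = 0 := by simp [hf]
  rw [hf0, add_zero] at h4
  exact h4

lemma NB2 (hr : 1 ≤ r) (h0 : 0 ≤ x) (h1 : x < 1) :
    HasSum (fun e : ℕ => (e:ℝ) * ((e:ℝ) - 1) * ((r + e - 1).choose e : ℝ) * x ^ e)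
      ((r:ℝ) * ((r:ℝ)+1) * x^2 / (1-x)^(r+2)) := by
  have h := hasSum_choose_mul_geometric_of_norm_lt_one (𝕜 := ℝ) (r+1) (norm_x_lt h0 h1)
  have h2 := h.mul_left ((r:ℝ) * ((r:ℝ)+1) * x^2)
  set f : ℕ → ℝ := fun e => (e:ℝ) * ((e:ℝ) - 1) * ((r + e - 1).choose e : ℝ) * x ^ e with hf
  have hshift : ∀ n : ℕ, f (n+2)
      = (r:ℝ) * ((r:ℝ)+1) * x^2 * (((n + (r+1)).choose (r+1) : ℝ) * x ^ n) := by
    intro n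
    have hnat : (n+2) * (n+1) * (r + (n+2) - 1).choose (n+2)
        = r * (r+1) * ((n + (r+1)).choose (r+1)) := by
      rw [show r + (n+2) - 1 = r + n + 1 by omega]
      have h3 := Nat.choose_succ_right_eq (r + n + 1) (n+1)
      rw [show r + n + 1 - (n+1) = r by omega] at h3
      have h5 := Nat.choose_succ_right_eq (r + n + 1) n
      rw [show r + n + 1 - n = r + 1 by omega] at h5
      have h4 := Nat.choose_symm (Nat.le_add_right n (r+1))
      rw [show n + (r+1) - n = r + 1 by omega] at h4
      rw [show (n:ℕ) + (r+1) = r + n + 1 by omega] at h4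
      calc (n+2) * (n+1) * (r + n + 1).choose (n+2)
          = (n+1) * ((r + n + 1).choose (n+1+1) * (n+1+1)) := by ring_nf
        _ = (n+1) * ((r + n + 1).choose (n+1) * r) := by rw [Nat.choose_succ_right_eq,
              show r + n + 1 - (n+1) = r by omega]
        _ = r * ((r + n + 1).choose (n+1) * (n+1)) := by ring
        _ = r * ((r + n + 1).choose n * (r+1)) := by rw [h5]
        _ = r * (r+1) * ((n + (r+1)).choose (r+1)) := by rw [← h4]; ring
    have hcast : ((n:ℝ)+2) * ((n:ℝ)+1) * ((r + (n+2) - 1).choose (n+2) : ℝ)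
        = (r:ℝ) * ((r:ℝ)+1) * ((n + (r+1)).choose (r+1) : ℝ) := by
      have := congrArg (fun t : ℕ => (t:ℝ)) hnat
      push_cast at this
      linarith
    simp only [hf]
    push_cast
    rw [show x^(n+2) = x^2 * x^n by ring]
    linear_combination (x^2 * x^n) * hcast
  have h3 : HasSum (fun n => f (n+2)) ((r:ℝ) * ((r:ℝ)+1) * x^2 / (1-x)^(r+2)) := by
    have hh : HasSum (fun n => f (n+2)) ((r:ℝ) * ((r:ℝ)+1) * x^2 * (1 / (1-x)^(r+1+1))) :=
      h2.congr_fun (fun n => hshift n)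
    rwa [show (r:ℝ) * ((r:ℝ)+1) * x^2 * (1 / (1-x)^(r+1+1))
        = (r:ℝ) * ((r:ℝ)+1) * x^2 / (1-x)^(r+2) by
      rw [mul_one_div]] at hh
  have h4 := (hasSum_nat_add_iff (f := f) 2).1 h3
  have hf01 : ∑ i ∈ Finset.range 2, f i = 0 := by
    rw [Finset.sum_range_succ, Finset.range_one, Finset.sum_singleton]
    simp [hf]
  rw [hf01, add_zero] at h4
  exact h4

/-- first moment: `∑ (r+e) C(r+e-1,e) x^e (1-x)^r = r/(1-x)` -/
lemma NB_T1 (hr : 1 ≤ r) (h0 : 0 ≤ x) (h1 : x < 1) :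
    HasSum (fun e : ℕ => ((r:ℝ) + (e:ℝ)) * ((r + e - 1).choose e : ℝ) * x ^ e * (1-x)^r)
      ((r:ℝ) / (1-x)) := by
  have hx : (1:ℝ) - x ≠ 0 := by linarith
  have hA := ((NB0 r hr h0 h1).mul_left (r:ℝ)).add (NB1 r hr h0 h1)
  have hB := hA.mul_right ((1-x)^r)
  have hval : ((r:ℝ) * (1 / (1-x)^r) + (r:ℝ) * x / (1-x)^(r+1)) * (1-x)^r = (r:ℝ) / (1-x) := by
    have hpow : (1-x)^(r+1) = (1-x)^r * (1-x) := pow_succ _ _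
    field_simp
    ring
  rw [hval] at hB
  apply hB.congr_fun
  intro e
  ring

/-- second moment: `∑ (r+e)² C(r+e-1,e) x^e (1-x)^r = r²/(1-x)² + r x/(1-x)²` -/
lemma NB_T2 (hr : 1 ≤ r) (h0 : 0 ≤ x) (h1 : x < 1) :
    HasSum (fun e : ℕ => ((r:ℝ) + (e:ℝ))^2 * ((r + e - 1).choose e : ℝ) * x ^ e * (1-x)^r)
      ((r:ℝ)^2 / (1-x)^2 + (r:ℝ) * x / (1-x)^2) := by
  have hx : (1:ℝ) - x ≠ 0 := by linarith
  have hA := (((NB0 r hr h0 h1).mul_left ((r:ℝ)^2)).add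
    ((NB1 r hr h0 h1).mul_left (2*(r:ℝ)+1))).add (NB2 r hr h0 h1)
  have hB := hA.mul_right ((1-x)^r)
  have hval : (((r:ℝ)^2 * (1 / (1-x)^r) + (2*(r:ℝ)+1) * ((r:ℝ) * x / (1-x)^(r+1)))
      + (r:ℝ) * ((r:ℝ)+1) * x^2 / (1-x)^(r+2)) * (1-x)^r
      = (r:ℝ)^2 / (1-x)^2 + (r:ℝ) * x / (1-x)^2 := by
    have hpow1 : (1-x)^(r+1) = (1-x)^r * (1-x) := pow_succ _ _
    have hpow2 : (1-x)^(r+2) = (1-x)^r * (1-x)^2 := by rw [pow_add]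
    field_simp
    ring
  rw [hval] at hB
  apply hB.congr_fun
  intro e
  ring

end NB


/-! ### PM in terms of Rp, and the main limit lemma -/

lemma two_zpow_neg_nat (a : ℕ) : (2:ℝ) ^ (-(a:ℤ)) = (1/2:ℝ) ^ a := by
  rw [zpow_neg, zpow_natCast, ← inv_pow, one_div]

lemma PM_eq (k n m : ℕ) (h : k + m ≤ n) :
    PM k n (k+m) = (1/2:ℝ)^m * Rp m (n - k - m) := by
  unfold PM Rp
  have h1 : ((k:ℕ):ℤ) - ((k+m:ℕ):ℤ) = -(m:ℤ) := by push_cast; ring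
  rw [h1, two_zpow_neg_nat]
  congr 1
  have h2 : n - (k+m) = n - k - m := by omega
  rw [h2]
  conv_lhs => rw [← Finset.prod_range_reflect]
  apply Finset.prod_congr rfl
  intro j hj
  rw [Finset.mem_range] at hj
  have h3 : ((n - k - m - 1 - j : ℕ) : ℤ) - ((n:ℤ) - (k:ℤ)) = -((m + 1 + j : ℕ) : ℤ) := by
    omega
  rw [h3, two_zpow_neg_nat]

lemma PM_bounds (k n m : ℕ) (h : k + m ≤ n) :
    0 ≤ PM k n (k+m) ∧ PM k n (k+m) ≤ (1/2:ℝ)^m := by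
  rw [PM_eq k n m h]
  constructor
  · exact mul_nonneg (half_pow_pos m).le (Rp_nonneg _ _)
  · have h1 := Rp_le_one m (n - k - m)
    have h2 := Rp_nonneg m (n - k - m)
    have h3 := half_pow_pos m
    nlinarith

lemma sum_Icc_eq_tsum (k n : ℕ) (F : ℕ → ℝ) :
    ∑ r ∈ Finset.Icc k n, F r = ∑' m : ℕ, (if k + m ≤ n then F (k+m) else 0) := by
  have h1 : Finset.Icc k n = Finset.Ico k (n+1) := by
    rw [Finset.Ico_add_one_right_eq_Icc]
  rw [h1, Finset.sum_Ico_eq_sum_range]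
  rw [tsum_eq_sum (s := Finset.range (n + 1 - k))
    (fun m hm => by rw [Finset.mem_range] at hm; rw [if_neg (by omega)])]
  apply Finset.sum_congr rfl
  intro m hm
  rw [Finset.mem_range] at hm
  rw [if_pos (by omega)]

lemma main_tendsto (k : ℕ) (hk : 1 ≤ k) (f : ℕ → ℝ) (C : ℝ)
    (hC : ∀ m, |f (k+m)| ≤ C * (((m:ℝ)+2) * ((m:ℝ)+1))) :
    Tendsto (fun n => ∑ r ∈ Finset.Icc k n, f r * PM k n r) atTop
      (nhds (∑' m : ℕ, f (k+m) * pp m)) := by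
  have hrw : (fun n => ∑ r ∈ Finset.Icc k n, f r * PM k n r)
      = fun n => ∑' m : ℕ, (if k + m ≤ n then f (k+m) * PM k n (k+m) else 0) := by
    funext n
    exact sum_Icc_eq_tsum k n (fun r => f r * PM k n r)
  rw [hrw]
  apply tendsto_tsum_of_dominated_convergence
    (bound := fun m : ℕ => C * (((m:ℝ)+2) * ((m:ℝ)+1)) * (1/2:ℝ)^m)
  · apply (summable_quad_geo.mul_left C).congr
    intro m
    ring
  · intro m
    have hev : (fun n : ℕ => f (k+m) * ((1/2:ℝ)^m * Rp m (n - k - m)))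
        =ᶠ[atTop] (fun n => if k + m ≤ n then f (k+m) * PM k n (k+m) else 0) := by
      filter_upwards [eventually_ge_atTop (k+m)] with n hn
      rw [if_pos hn, PM_eq k n m hn]
    apply Tendsto.congr' hev
    have h2 : Tendsto (fun n : ℕ => Rp m (n - k - m)) atTop (nhds (Q m)) := by
      have h3 : (fun n : ℕ => Rp m (n - k - m)) = (Rp m) ∘ (fun n => n - (k + m)) := by
        funext n; simp [Nat.sub_sub]
      rw [h3]
      exact (Q_tendsto m).comp (tendsto_sub_atTop_nat (k+m))
    have h4 := (h2.const_mul ((1/2:ℝ)^m)).const_mul (f (k+m))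
    convert h4 using 1
    rfl
  · filter_upwards with n
    intro m
    by_cases hmn : k + m ≤ n
    · rw [if_pos hmn]
      obtain ⟨hb0, hb1⟩ := PM_bounds k n m hmn
      rw [Real.norm_eq_abs, abs_mul, abs_of_nonneg hb0]
      have h5 := hC m
      have h6 : |f (k+m)| * PM k n (k+m) ≤ (C * (((m:ℝ)+2) * ((m:ℝ)+1))) * (1/2:ℝ)^m := by
        apply mul_le_mul h5 hb1 hb0 (le_trans (abs_nonneg _) h5)
      linarith
    · rw [if_neg hmn]
      have h5 := le_trans (abs_nonneg (f (k+m))) (hC m)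
      have h6 := half_pow_pos m
      simp only [norm_zero]
      nlinarith


/-! ### truncation error -/

section Trunc

variable {ε : ℝ}

noncomputable def xp (ε : ℝ) : ℝ := (1 + 3*ε)/4
noncomputable def rho (ε : ℝ) : ℝ := ε / xp ε

lemma xp_facts (h0 : 0 ≤ ε) (h1 : ε < 1) :
    0 < xp ε ∧ xp ε ≤ 1 ∧ xp ε < 1 ∧ 1 - xp ε = 3*(1-ε)/4 := by
  unfold xp
  refine ⟨by linarith, by linarith, by linarith, by ring⟩

lemma rho_facts (h0 : 0 ≤ ε) (h1 : ε < 1) :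
    0 ≤ rho ε ∧ rho ε < 1 ∧ rho ε * xp ε = ε := by
  obtain ⟨hx0, hx1, hx1', hx2⟩ := xp_facts h0 h1
  unfold rho
  refine ⟨div_nonneg h0 hx0.le, ?_, div_mul_cancel₀ ε hx0.ne'⟩
  rw [div_lt_one hx0]
  unfold xp
  linarith

/-- the difference series for the first moment -/
noncomputable def D1 (ε : ℝ) (r n : ℕ) : ℝ :=
  ∑' e : ℕ, (((r+e:ℕ):ℝ) - ((min (r+e) n : ℕ):ℝ))
    * ((r + e - 1).choose e : ℝ) * ε^e * (1-ε)^r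

/-- the difference series for the second moment -/
noncomputable def D2 (ε : ℝ) (r n : ℕ) : ℝ :=
  ∑' e : ℕ, ((((r+e)^2:ℕ):ℝ) - ((min ((r+e)^2) (n^2) : ℕ):ℝ))
    * ((r + e - 1).choose e : ℝ) * ε^e * (1-ε)^r

variable (h0 : 0 ≤ ε) (h1 : ε < 1)

include h0 h1

lemma summable_full1 {r : ℕ} (hr : 1 ≤ r) :
    Summable (fun e : ℕ => ((r+e:ℕ):ℝ) * ((r + e - 1).choose e : ℝ) * ε^e * (1-ε)^r) := by
  apply (NB_T1 r hr h0 h1).summable.congr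
  intro e; push_cast; ring

lemma summable_full2 {r : ℕ} (hr : 1 ≤ r) :
    Summable (fun e : ℕ => (((r+e)^2:ℕ):ℝ) * ((r + e - 1).choose e : ℝ) * ε^e * (1-ε)^r) := by
  apply (NB_T2 r hr h0 h1).summable.congr
  intro e; push_cast; ring

lemma summable_min1 {r n : ℕ} (hr : 1 ≤ r) :
    Summable (fun e : ℕ => ((min (r+e) n : ℕ):ℝ)
      * ((r + e - 1).choose e : ℝ) * ε^e * (1-ε)^r) := by
  apply Summable.of_nonneg_of_le ?_ ?_ (summable_full1 h0 h1 hr)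
  · intro e
    have h2 : (0:ℝ) ≤ 1 - ε := by linarith
    exact mul_nonneg (mul_nonneg (mul_nonneg (Nat.cast_nonneg _) (Nat.cast_nonneg _))
      (pow_nonneg h0 e)) (pow_nonneg h2 r)
  · intro e
    have h2 : (0:ℝ) ≤ 1 - ε := by linarith
    apply mul_le_mul_of_nonneg_right _ (pow_nonneg h2 r)
    apply mul_le_mul_of_nonneg_right _ (pow_nonneg h0 e)
    apply mul_le_mul_of_nonneg_right _ (Nat.cast_nonneg _)
    exact Nat.cast_le.2 (Nat.min_le_left _ _)

lemma summable_min2 {r n : ℕ} (hr : 1 ≤ r) :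
    Summable (fun e : ℕ => ((min ((r+e)^2) (n^2) : ℕ):ℝ)
      * ((r + e - 1).choose e : ℝ) * ε^e * (1-ε)^r) := by
  apply Summable.of_nonneg_of_le ?_ ?_ (summable_full2 h0 h1 hr)
  · intro e
    have h2 : (0:ℝ) ≤ 1 - ε := by linarith
    exact mul_nonneg (mul_nonneg (mul_nonneg (Nat.cast_nonneg _) (Nat.cast_nonneg _))
      (pow_nonneg h0 e)) (pow_nonneg h2 r)
  · intro e
    have h2 : (0:ℝ) ≤ 1 - ε := by linarith
    apply mul_le_mul_of_nonneg_right _ (pow_nonneg h2 r)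
    apply mul_le_mul_of_nonneg_right _ (pow_nonneg h0 e)
    apply mul_le_mul_of_nonneg_right _ (Nat.cast_nonneg _)
    exact Nat.cast_le.2 (Nat.min_le_left _ _)

lemma summable_diff1 {r n : ℕ} (hr : 1 ≤ r) :
    Summable (fun e : ℕ => (((r+e:ℕ):ℝ) - ((min (r+e) n : ℕ):ℝ))
      * ((r + e - 1).choose e : ℝ) * ε^e * (1-ε)^r) := by
  apply ((summable_full1 h0 h1 hr).sub (summable_min1 h0 h1 hr (n := n))).congr
  intro e; ring

lemma summable_diff2 {r n : ℕ} (hr : 1 ≤ r) :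
    Summable (fun e : ℕ => ((((r+e)^2:ℕ):ℝ) - ((min ((r+e)^2) (n^2) : ℕ):ℝ))
      * ((r + e - 1).choose e : ℝ) * ε^e * (1-ε)^r) := by
  apply ((summable_full2 h0 h1 hr).sub (summable_min2 h0 h1 hr (n := n))).congr
  intro e; ring

lemma diff1_nonneg (r n e : ℕ) :
    0 ≤ (((r+e:ℕ):ℝ) - ((min (r+e) n : ℕ):ℝ))
      * ((r + e - 1).choose e : ℝ) * ε^e * (1-ε)^r := by
  have hm : ((min (r+e) n : ℕ):ℝ) ≤ ((r+e:ℕ):ℝ) :=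
    Nat.cast_le.2 (Nat.min_le_left _ _)
  have h3 : (0:ℝ) ≤ 1 - ε := by linarith
  have h2 : (0:ℝ) ≤ ((r+e:ℕ):ℝ) - ((min (r+e) n : ℕ):ℝ) := by linarith
  exact mul_nonneg (mul_nonneg (mul_nonneg h2 (Nat.cast_nonneg _))
    (pow_nonneg h0 e)) (pow_nonneg h3 r)

lemma diff2_nonneg (r n e : ℕ) :
    0 ≤ ((((r+e)^2:ℕ):ℝ) - ((min ((r+e)^2) (n^2) : ℕ):ℝ))
      * ((r + e - 1).choose e : ℝ) * ε^e * (1-ε)^r := by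
  have hm : ((min ((r+e)^2) (n^2) : ℕ):ℝ) ≤ (((r+e)^2:ℕ):ℝ) :=
    Nat.cast_le.2 (Nat.min_le_left _ _)
  have h3 : (0:ℝ) ≤ 1 - ε := by linarith
  have h2 : (0:ℝ) ≤ (((r+e)^2:ℕ):ℝ) - ((min ((r+e)^2) (n^2) : ℕ):ℝ) := by linarith
  exact mul_nonneg (mul_nonneg (mul_nonneg h2 (Nat.cast_nonneg _))
    (pow_nonneg h0 e)) (pow_nonneg h3 r)

lemma D1_nonneg (r n : ℕ) : 0 ≤ D1 ε r n :=
  tsum_nonneg (fun e => diff1_nonneg h0 h1 r n e)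

lemma D2_nonneg (r n : ℕ) : 0 ≤ D2 ε r n :=
  tsum_nonneg (fun e => diff2_nonneg h0 h1 r n e)

lemma D1_le_D2 {r n : ℕ} (hr : 1 ≤ r) : D1 ε r n ≤ D2 ε r n := by
  apply Summable.tsum_le_tsum _ (summable_diff1 h0 h1 hr) (summable_diff2 h0 h1 hr)
  intro e
  have hfac : (0:ℝ) ≤ ((r + e - 1).choose e : ℝ) * ε^e * (1-ε)^r := by
    have : (0:ℝ) ≤ 1 - ε := by linarith
    positivity
  have key : (((r+e:ℕ):ℝ) - ((min (r+e) n : ℕ):ℝ))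
      ≤ ((((r+e)^2:ℕ):ℝ) - ((min ((r+e)^2) (n^2) : ℕ):ℝ)) := by
    by_cases hle : r + e ≤ n
    · rw [min_eq_left hle, min_eq_left (Nat.pow_le_pow_left hle 2)]
      simp
    · push_neg at hle
      rw [min_eq_right hle.le, min_eq_right (Nat.pow_le_pow_left hle.le 2)]
      have ha' : (n:ℝ) + 1 ≤ (r:ℝ) + (e:ℝ) := by
        have : n + 1 ≤ r + e := hle
        exact_mod_cast this
      have hb : (1:ℝ) ≤ (r:ℝ) + (e:ℝ) := by
        have : 1 ≤ r + e := by omega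
        exact_mod_cast this
      have hc : (0:ℝ) ≤ (n:ℝ) := Nat.cast_nonneg n
      push_cast
      have key2 : (0:ℝ) ≤ ((r:ℝ)+(e:ℝ)-(n:ℝ)) * ((r:ℝ)+(e:ℝ)+(n:ℝ)-1) :=
        mul_nonneg (by linarith) (by linarith)
      nlinarith [key2]
  calc (((r+e:ℕ):ℝ) - ((min (r+e) n : ℕ):ℝ)) * ((r + e - 1).choose e : ℝ) * ε^e * (1-ε)^r
      = (((r+e:ℕ):ℝ) - ((min (r+e) n : ℕ):ℝ)) * (((r + e - 1).choose e : ℝ) * ε^e * (1-ε)^r) := by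
        ring
    _ ≤ ((((r+e)^2:ℕ):ℝ) - ((min ((r+e)^2) (n^2) : ℕ):ℝ))
        * (((r + e - 1).choose e : ℝ) * ε^e * (1-ε)^r) := mul_le_mul_of_nonneg_right key hfac
    _ = ((((r+e)^2:ℕ):ℝ) - ((min ((r+e)^2) (n^2) : ℕ):ℝ))
        * ((r + e - 1).choose e : ℝ) * ε^e * (1-ε)^r := by ring

lemma D2_le {r n : ℕ} (hr : 1 ≤ r) (hrn : r ≤ n) :
    D2 ε r n ≤ rho ε ^ (n-r+1) * (4/3:ℝ)^r * ((r:ℝ)^2 * (32/(9*(1-ε)^2))) := by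
  obtain ⟨hx0, hx1, hx1', hx2⟩ := xp_facts h0 h1
  obtain ⟨hr0, hr1, hr2⟩ := rho_facts h0 h1
  have h1e : (0:ℝ) < 1 - ε := by linarith
  have hsum2 := NB_T2 r hr hx0.le hx1'
  -- bound series
  have hb : HasSum (fun e : ℕ => (rho ε ^ (n-r+1) * (4/3:ℝ)^r)
      * (((r:ℝ)+(e:ℝ))^2 * ((r + e - 1).choose e : ℝ) * (xp ε)^e * (1-(xp ε))^r))
      ((rho ε ^ (n-r+1) * (4/3:ℝ)^r) * ((r:ℝ)^2/(1-(xp ε))^2 + (r:ℝ)*(xp ε)/(1-(xp ε))^2)) :=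
    hsum2.mul_left _
  have hterm : ∀ e : ℕ, ((((r+e)^2:ℕ):ℝ) - ((min ((r+e)^2) (n^2) : ℕ):ℝ))
      * ((r + e - 1).choose e : ℝ) * ε^e * (1-ε)^r
      ≤ (rho ε ^ (n-r+1) * (4/3:ℝ)^r)
        * (((r:ℝ)+(e:ℝ))^2 * ((r + e - 1).choose e : ℝ) * (xp ε)^e * (1-(xp ε))^r) := by
    intro e
    have hCpos : (0:ℝ) ≤ ((r + e - 1).choose e : ℝ) := Nat.cast_nonneg _
    by_cases hle : r + e ≤ n
    · rw [min_eq_left (Nat.pow_le_pow_left hle 2)]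
      simp only [sub_self, zero_mul]
      have h1x : (0:ℝ) ≤ 1 - xp ε := by linarith
      positivity
    · push_neg at hle
      rw [min_eq_right (Nat.pow_le_pow_left hle.le 2)]
      have hdiff : (((r+e)^2:ℕ):ℝ) - (((n^2):ℕ):ℝ) ≤ ((r:ℝ)+(e:ℝ))^2 := by
        push_cast
        have : (0:ℝ) ≤ (n:ℝ)^2 := by positivity
        nlinarith
      have hdnn : (0:ℝ) ≤ (((r+e)^2:ℕ):ℝ) - (((n^2):ℕ):ℝ) := by
        have := Nat.pow_le_pow_left hle.le 2
        have h' : ((n^2:ℕ):ℝ) ≤ (((r+e)^2:ℕ):ℝ) := Nat.cast_le.2 this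
        linarith
      -- rewrite ε^e and (1-ε)^r
      have heps : ε^e = rho ε ^ e * xp ε ^ e := by rw [← mul_pow, hr2]
      have h1me : (1-ε)^r = (4/3:ℝ)^r * (1 - xp ε)^r := by
        rw [← mul_pow]
        congr 1
        rw [hx2]; ring
      have hrho_le : rho ε ^ e ≤ rho ε ^ (n-r+1) :=
        pow_le_pow_of_le_one hr0 hr1.le (by omega)
      have h1x : (0:ℝ) ≤ 1 - xp ε := by linarith
      calc ((((r+e)^2:ℕ):ℝ) - ((n^2:ℕ):ℝ)) * ((r + e - 1).choose e : ℝ) * ε^e * (1-ε)^r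
          ≤ ((r:ℝ)+(e:ℝ))^2 * ((r + e - 1).choose e : ℝ) * ε^e * (1-ε)^r := by
            apply mul_le_mul_of_nonneg_right _ (by positivity)
            apply mul_le_mul_of_nonneg_right _ (by positivity)
            exact mul_le_mul_of_nonneg_right hdiff hCpos
        _ = rho ε ^ e * ((4/3:ℝ)^r * (((r:ℝ)+(e:ℝ))^2 * ((r + e - 1).choose e : ℝ)
            * (xp ε)^e * (1-(xp ε))^r)) := by
            rw [heps, h1me]; ring
        _ ≤ rho ε ^ (n-r+1) * ((4/3:ℝ)^r * (((r:ℝ)+(e:ℝ))^2 * ((r + e - 1).choose e : ℝ)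
            * (xp ε)^e * (1-(xp ε))^r)) := by
            apply mul_le_mul_of_nonneg_right hrho_le (by positivity)
        _ = (rho ε ^ (n-r+1) * (4/3:ℝ)^r)
            * (((r:ℝ)+(e:ℝ))^2 * ((r + e - 1).choose e : ℝ) * (xp ε)^e * (1-(xp ε))^r) := by
            ring
  have hle1 : D2 ε r n ≤ (rho ε ^ (n-r+1) * (4/3:ℝ)^r)
      * ((r:ℝ)^2/(1-(xp ε))^2 + (r:ℝ)*(xp ε)/(1-(xp ε))^2) := by
    rw [D2]
    rw [← hb.tsum_eq]
    exact Summable.tsum_le_tsum hterm (summable_diff2 h0 h1 hr) hb.summable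
  apply le_trans hle1
  apply mul_le_mul_of_nonneg_left _ (by positivity)
  -- value bound
  rw [hx2]
  have hrr : (1:ℝ) ≤ (r:ℝ) := by exact_mod_cast hr
  have hx1'' : xp ε ≤ 1 := hx1
  have hden : (0:ℝ) < (3*(1-ε)/4)^2 := by positivity
  rw [← add_div, div_le_iff₀ hden]
  have hexp : (3*(1-ε)/4)^2 = 9*(1-ε)^2/16 := by ring
  have h9 : (0:ℝ) < 9*(1-ε)^2 := by positivity
  have hgoal : (r:ℝ)^2 + (r:ℝ)*(xp ε) ≤ 2*(r:ℝ)^2 := by nlinarith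
  calc (r:ℝ)^2 + (r:ℝ)*(xp ε) ≤ 2*(r:ℝ)^2 := hgoal
    _ = (r:ℝ)^2 * (32/(9*(1-ε)^2)) * (9*(1-ε)^2/16) := by field_simp; ring
    _ = (r:ℝ)^2 * (32/(9*(1-ε)^2)) * (3*(1-ε)/4)^2 := by rw [hexp]

end Trunc


/-! ### error sums -/

noncomputable def Err1 (k : ℕ) (ε : ℝ) (n : ℕ) : ℝ :=
  ∑ r ∈ Finset.Icc k n, D1 ε r n * PM k n r

noncomputable def Err2 (k : ℕ) (ε : ℝ) (n : ℕ) : ℝ :=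
  ∑ r ∈ Finset.Icc k n, D2 ε r n * PM k n r

lemma PM_r_bounds (k n r : ℕ) (hkr : k ≤ r) (hrn : r ≤ n) :
    0 ≤ PM k n r ∧ PM k n r ≤ (1/2:ℝ)^(r-k) := by
  have h := PM_bounds k n (r-k) (by omega)
  rwa [show k + (r-k) = r by omega] at h

section ErrBounds

variable {k : ℕ} {ε : ℝ} (hk : 1 ≤ k) (h0 : 0 ≤ ε) (h1 : ε < 1)

include hk h0 h1

lemma Err1_nonneg (n : ℕ) : 0 ≤ Err1 k ε n := by
  apply Finset.sum_nonneg
  intro r hr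
  rw [Finset.mem_Icc] at hr
  exact mul_nonneg (D1_nonneg h0 h1 r n) (PM_r_bounds k n r hr.1 hr.2).1

lemma Err1_le_Err2 (n : ℕ) : Err1 k ε n ≤ Err2 k ε n := by
  apply Finset.sum_le_sum
  intro r hr
  rw [Finset.mem_Icc] at hr
  exact mul_le_mul_of_nonneg_right (D1_le_D2 h0 h1 (le_trans hk hr.1))
    (PM_r_bounds k n r hr.1 hr.2).1

lemma Err2_le (n : ℕ) : Err2 k ε n ≤ (32/(9*(1-ε)^2)) * 2^k * ((n:ℝ)+1)^3
    * (max (2/3:ℝ) (rho ε))^(n+1) := by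
  set μ := max (2/3:ℝ) (rho ε) with hμ
  obtain ⟨hr0, hr1, hr2⟩ := rho_facts h0 h1
  have hμ0 : (0:ℝ) ≤ μ := le_trans (by norm_num) (le_max_left _ _)
  have hK0 : (0:ℝ) ≤ 32/(9*(1-ε)^2) := by positivity
  set B : ℝ := (32/(9*(1-ε)^2)) * 2^k * ((n:ℝ)+1)^2 * μ^(n+1) with hB
  have hterm : ∀ r ∈ Finset.Icc k n, D2 ε r n * PM k n r ≤ B := by
    intro r hr
    rw [Finset.mem_Icc] at hr
    have hr1' : 1 ≤ r := le_trans hk hr.1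
    have h5 := D2_le h0 h1 hr1' hr.2
    have h6 := PM_r_bounds k n r hr.1 hr.2
    have hlhs0 : (0:ℝ) ≤ rho ε ^ (n-r+1) * (4/3:ℝ)^r * ((r:ℝ)^2 * (32/(9*(1-ε)^2))) := by
      positivity
    have step1 : D2 ε r n * PM k n r
        ≤ (rho ε ^ (n-r+1) * (4/3:ℝ)^r * ((r:ℝ)^2 * (32/(9*(1-ε)^2)))) * (1/2:ℝ)^(r-k) :=
      mul_le_mul h5 h6.2 h6.1 hlhs0
    have hhalf : (1/2:ℝ)^(r-k) = 2^k * (1/2:ℝ)^r := by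
      have : (2:ℝ)^k * (1/2:ℝ)^r = (1/2:ℝ)^(r-k) := by
        calc (2:ℝ)^k * (1/2:ℝ)^r = (2:ℝ)^k * ((1/2:ℝ)^k * (1/2:ℝ)^(r-k)) := by
              rw [← pow_add, show k + (r-k) = r by omega]
          _ = ((2:ℝ) * (1/2:ℝ))^k * (1/2:ℝ)^(r-k) := by rw [mul_pow]; ring
          _ = (1/2:ℝ)^(r-k) := by norm_num
      linarith [this]
    have h43 : (4/3:ℝ)^r * (1/2:ℝ)^r = (2/3:ℝ)^r := by
      rw [← mul_pow]; norm_num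
    have step2 : (rho ε ^ (n-r+1) * (4/3:ℝ)^r * ((r:ℝ)^2 * (32/(9*(1-ε)^2)))) * (1/2:ℝ)^(r-k)
        = rho ε ^ (n-r+1) * (2/3:ℝ)^r * ((r:ℝ)^2 * (32/(9*(1-ε)^2)) * 2^k) := by
      rw [hhalf, ← h43]
      ring
    have hA : (2/3:ℝ)^r ≤ μ^r := pow_le_pow_left₀ (by norm_num) (le_max_left _ _) r
    have hBle : rho ε ^ (n-r+1) ≤ μ^(n-r+1) := pow_le_pow_left₀ hr0 (le_max_right _ _) _
    have hrc : (r:ℝ)^2 ≤ ((n:ℝ)+1)^2 := by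
      have : (r:ℝ) ≤ (n:ℝ) + 1 := by
        have : (r:ℝ) ≤ (n:ℝ) := Nat.cast_le.2 hr.2
        linarith
      have hr0' : (0:ℝ) ≤ (r:ℝ) := Nat.cast_nonneg r
      nlinarith
    have step3 : rho ε ^ (n-r+1) * (2/3:ℝ)^r * ((r:ℝ)^2 * (32/(9*(1-ε)^2)) * 2^k)
        ≤ μ^(n-r+1) * μ^r * (((n:ℝ)+1)^2 * (32/(9*(1-ε)^2)) * 2^k) := by
      have hp1 : (0:ℝ) ≤ (2/3:ℝ)^r := by positivity
      have hp2 : (0:ℝ) ≤ rho ε ^ (n-r+1) := pow_nonneg hr0 _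
      have hp3 : (0:ℝ) ≤ μ^(n-r+1) := pow_nonneg hμ0 _
      have hp4 : (0:ℝ) ≤ μ^r := pow_nonneg hμ0 _
      have hp5 : (0:ℝ) ≤ (r:ℝ)^2 * (32/(9*(1-ε)^2)) * 2^k := by positivity
      have hp6 : (0:ℝ) ≤ ((n:ℝ)+1)^2 * (32/(9*(1-ε)^2)) * 2^k := by positivity
      apply mul_le_mul
      · exact mul_le_mul hBle hA hp1 hp3
      · apply mul_le_mul_of_nonneg_right _ (by positivity)
        exact mul_le_mul_of_nonneg_right hrc hK0
      · exact hp5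
      · exact mul_nonneg hp3 hp4
    have step4 : μ^(n-r+1) * μ^r * (((n:ℝ)+1)^2 * (32/(9*(1-ε)^2)) * 2^k) = B := by
      rw [← pow_add, show (n-r+1) + r = n+1 by omega, hB]
      ring
    calc D2 ε r n * PM k n r
        ≤ (rho ε ^ (n-r+1) * (4/3:ℝ)^r * ((r:ℝ)^2 * (32/(9*(1-ε)^2)))) * (1/2:ℝ)^(r-k) := step1
      _ = rho ε ^ (n-r+1) * (2/3:ℝ)^r * ((r:ℝ)^2 * (32/(9*(1-ε)^2)) * 2^k) := step2
      _ ≤ μ^(n-r+1) * μ^r * (((n:ℝ)+1)^2 * (32/(9*(1-ε)^2)) * 2^k) := step3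
      _ = B := step4
  have hcard := Finset.sum_le_card_nsmul (Finset.Icc k n) _ B hterm
  rw [Nat.card_Icc, nsmul_eq_mul] at hcard
  have hB0 : 0 ≤ B := by
    rw [hB]; positivity
  have hcard2 : ((n + 1 - k : ℕ):ℝ) ≤ (n:ℝ) + 1 := by
    have : (n + 1 - k : ℕ) ≤ n + 1 := by omega
    exact_mod_cast this
  calc Err2 k ε n ≤ ((n + 1 - k : ℕ):ℝ) * B := hcard
    _ ≤ ((n:ℝ)+1) * B := mul_le_mul_of_nonneg_right hcard2 hB0
    _ = (32/(9*(1-ε)^2)) * 2^k * ((n:ℝ)+1)^3 * μ^(n+1) := by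
        rw [hB]; ring

lemma bound_tendsto_zero :
    Tendsto (fun n : ℕ => (32/(9*(1-ε)^2)) * 2^k * ((n:ℝ)+1)^3
      * (max (2/3:ℝ) (rho ε))^(n+1)) atTop (nhds 0) := by
  set μ := max (2/3:ℝ) (rho ε) with hμ
  obtain ⟨hr0, hr1, _⟩ := rho_facts h0 h1
  have hμ0 : (0:ℝ) ≤ μ := le_trans (by norm_num) (le_max_left _ _)
  have hμ1 : μ < 1 := max_lt (by norm_num) hr1
  have hs := summable_pow_mul_geometric_of_norm_lt_one (R := ℝ) 3
    (r := μ) (by rwa [Real.norm_eq_abs, abs_of_nonneg hμ0])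
  have h7 := hs.tendsto_atTop_zero
  have h8 : Tendsto (fun n : ℕ => ((n+1:ℕ):ℝ)^3 * μ^(n+1)) atTop (nhds 0) :=
    h7.comp (tendsto_add_atTop_nat 1)
  have h9 : Tendsto (fun n : ℕ => ((32/(9*(1-ε)^2)) * 2^k) * (((n+1:ℕ):ℝ)^3 * μ^(n+1)))
      atTop (nhds (((32/(9*(1-ε)^2)) * 2^k) * 0)) := h8.const_mul _
  rw [mul_zero] at h9
  apply h9.congr
  intro n
  push_cast
  ring

lemma Err1_tendsto_zero : Tendsto (Err1 k ε) atTop (nhds 0) := by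
  apply squeeze_zero (fun n => Err1_nonneg hk h0 h1 n)
    (fun n => le_trans (Err1_le_Err2 hk h0 h1 n) (Err2_le hk h0 h1 n))
  exact bound_tendsto_zero hk h0 h1

lemma Err2_tendsto_zero : Tendsto (Err2 k ε) atTop (nhds 0) := by
  apply squeeze_zero (fun n => le_trans (Err1_nonneg hk h0 h1 n) (Err1_le_Err2 hk h0 h1 n))
    (fun n => Err2_le hk h0 h1 n)
  exact bound_tendsto_zero hk h0 h1

/-! ### decomposition of EN, EN2 -/

lemma EN_eq (n : ℕ) :
    EN k ε n = (∑ r ∈ Finset.Icc k n, ((r:ℝ)/(1-ε)) * PM k n r) - Err1 k ε n := by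
  unfold EN Err1
  rw [← Finset.sum_sub_distrib]
  apply Finset.sum_congr rfl
  intro r hr
  rw [Finset.mem_Icc] at hr
  have hr1 : 1 ≤ r := le_trans hk hr.1
  rw [tsum_mul_right]
  have hsplit : (∑' e:ℕ, (min (r + e) n : ℝ) * ((r + e - 1).choose e : ℝ) * ε ^ e * (1 - ε) ^ r)
      = (r:ℝ)/(1-ε) - D1 ε r n := by
    have hterm : ∀ e:ℕ, (min (r + e) n : ℝ) * ((r + e - 1).choose e : ℝ) * ε ^ e * (1 - ε) ^ r
        = ((r+e:ℕ):ℝ) * ((r + e - 1).choose e : ℝ) * ε^e * (1-ε)^r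
          - (((r+e:ℕ):ℝ) - ((min (r+e) n : ℕ):ℝ)) * ((r + e - 1).choose e : ℝ)
            * ε^e * (1-ε)^r := by
      intro e; push_cast; ring
    rw [tsum_congr hterm, Summable.tsum_sub (summable_full1 h0 h1 hr1) (summable_diff1 h0 h1 hr1)]
    unfold D1
    congr 1
    rw [← (NB_T1 r hr1 h0 h1).tsum_eq]
    apply tsum_congr; intro e; push_cast; ring
  rw [hsplit]
  ring

lemma EN2_eq (n : ℕ) :
    EN2 k ε n = (∑ r ∈ Finset.Icc k n, (((r:ℝ)^2 + ε*(r:ℝ))/(1-ε)^2) * PM k n r)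
      - Err2 k ε n := by
  unfold EN2 Err2
  rw [← Finset.sum_sub_distrib]
  apply Finset.sum_congr rfl
  intro r hr
  rw [Finset.mem_Icc] at hr
  have hr1 : 1 ≤ r := le_trans hk hr.1
  rw [tsum_mul_right]
  have hsplit : (∑' e:ℕ, (min ((r + e)^2) (n^2) : ℝ) * ((r + e - 1).choose e : ℝ)
        * ε ^ e * (1 - ε) ^ r)
      = ((r:ℝ)^2 + ε*(r:ℝ))/(1-ε)^2 - D2 ε r n := by
    have hterm : ∀ e:ℕ, (min ((r + e)^2) (n^2) : ℝ) * ((r + e - 1).choose e : ℝ)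
          * ε ^ e * (1 - ε) ^ r
        = (((r+e)^2:ℕ):ℝ) * ((r + e - 1).choose e : ℝ) * ε^e * (1-ε)^r
          - ((((r+e)^2:ℕ):ℝ) - ((min ((r+e)^2) (n^2) : ℕ):ℝ)) * ((r + e - 1).choose e : ℝ)
            * ε^e * (1-ε)^r := by
      intro e; push_cast; ring
    rw [tsum_congr hterm, Summable.tsum_sub (summable_full2 h0 h1 hr1) (summable_diff2 h0 h1 hr1)]
    unfold D2
    congr 1
    have hval : (r:ℝ)^2 / (1-ε)^2 + (r:ℝ)*ε/(1-ε)^2 = ((r:ℝ)^2 + ε*(r:ℝ))/(1-ε)^2 := by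
      rw [← add_div]
      ring_nf
    rw [← hval, ← (NB_T2 r hr1 h0 h1).tsum_eq]
    apply tsum_congr; intro e; push_cast; ring
  rw [hsplit]
  ring

/-! ### limit values -/

lemma L1_eq : ∑' m : ℕ, (((k+m:ℕ):ℝ)/(1-ε)) * pp m = ((k:ℝ) + c₀)/(1-ε) := by
  have h1e : (1:ℝ) - ε ≠ 0 := by intro h; rw [sub_eq_zero] at h; linarith
  have hsum : ∑' m : ℕ, ((k:ℝ)+(m:ℝ)) * pp m = (k:ℝ) + c₀ := by
    have := Summable.tsum_add (pp_summable.mul_left (k:ℝ)) summable_m_pp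
    rw [tsum_mul_left, pp_tsum, moment1, mul_one] at this
    rw [← this]
    apply tsum_congr; intro m; ring
  calc ∑' m : ℕ, (((k+m:ℕ):ℝ)/(1-ε)) * pp m
      = ∑' m : ℕ, (1/(1-ε)) * (((k:ℝ)+(m:ℝ)) * pp m) := by
        apply tsum_congr; intro m; push_cast; ring
    _ = (1/(1-ε)) * ((k:ℝ) + c₀) := by rw [tsum_mul_left, hsum]
    _ = ((k:ℝ) + c₀)/(1-ε) := by ring

lemma L2_eq : ∑' m : ℕ, ((((k+m:ℕ):ℝ)^2 + ε*((k+m:ℕ):ℝ))/(1-ε)^2) * pp m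
    = (((k:ℝ)+c₀)^2 + c₀ + c₁ + ε*((k:ℝ)+c₀))/(1-ε)^2 := by
  have hsum : ∑' m : ℕ, (((k:ℝ)+(m:ℝ))^2 + ε*((k:ℝ)+(m:ℝ))) * pp m
      = ((k:ℝ)+c₀)^2 + c₀ + c₁ + ε*((k:ℝ)+c₀) := by
    have hs1 : Summable (fun m : ℕ => ((k:ℝ)^2 + ε*(k:ℝ)) * pp m) :=
      pp_summable.mul_left _
    have hs2 : Summable (fun m : ℕ => (2*(k:ℝ)+ε) * ((m:ℝ) * pp m)) :=
      summable_m_pp.mul_left _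
    have hs3 := summable_m2_pp
    have := Summable.tsum_add (hs1.add hs2) hs3
    rw [Summable.tsum_add hs1 hs2, tsum_mul_left, tsum_mul_left, pp_tsum, moment1, moment2] at this
    have heq : ∀ m : ℕ, (((k:ℝ)+(m:ℝ))^2 + ε*((k:ℝ)+(m:ℝ))) * pp m
        = (((k:ℝ)^2 + ε*(k:ℝ)) * pp m + (2*(k:ℝ)+ε) * ((m:ℝ) * pp m)) + (m:ℝ)^2 * pp m := by
      intro m; ring
    rw [tsum_congr heq, this]
    ring
  calc ∑' m : ℕ, ((((k+m:ℕ):ℝ)^2 + ε*((k+m:ℕ):ℝ))/(1-ε)^2) * pp m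
      = ∑' m : ℕ, (1/(1-ε)^2) * ((((k:ℝ)+(m:ℝ))^2 + ε*((k:ℝ)+(m:ℝ))) * pp m) := by
        apply tsum_congr; intro m; push_cast; ring
    _ = (1/(1-ε)^2) * (((k:ℝ)+c₀)^2 + c₀ + c₁ + ε*((k:ℝ)+c₀)) := by rw [tsum_mul_left, hsum]
    _ = (((k:ℝ)+c₀)^2 + c₀ + c₁ + ε*((k:ℝ)+c₀))/(1-ε)^2 := by ring

/-! ### the main limits -/

lemma EN_tendsto : Tendsto (EN k ε) atTop (nhds (((k:ℝ) + c₀)/(1-ε))) := by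
  have h1e : (0:ℝ) < 1 - ε := by linarith
  have hmain := main_tendsto k hk (fun r => (r:ℝ)/(1-ε)) (((k:ℝ)+1)/(1-ε)) ?_
  · rw [L1_eq hk h0 h1] at hmain
    have heq : EN k ε = fun n => (∑ r ∈ Finset.Icc k n, ((r:ℝ)/(1-ε)) * PM k n r)
        - Err1 k ε n := funext (fun n => EN_eq hk h0 h1 n)
    rw [heq]
    have := hmain.sub (Err1_tendsto_zero hk h0 h1)
    simpa using this
  · intro m
    have hnn : (0:ℝ) ≤ ((k+m:ℕ):ℝ)/(1-ε) := by positivity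
    rw [abs_of_nonneg hnn]
    rw [div_le_iff₀ h1e]
    have hle : ((k+m:ℕ):ℝ) ≤ ((k:ℝ)+1) * (((m:ℝ)+2) * ((m:ℝ)+1)) := by
      push_cast
      have hk0 : (0:ℝ) ≤ (k:ℝ) := Nat.cast_nonneg k
      have hm0 : (0:ℝ) ≤ (m:ℝ) := Nat.cast_nonneg m
      nlinarith [mul_nonneg hk0 hm0, mul_nonneg (mul_nonneg hk0 hm0) hm0,
        mul_nonneg hm0 hm0]
    calc ((k+m:ℕ):ℝ) ≤ ((k:ℝ)+1) * (((m:ℝ)+2) * ((m:ℝ)+1)) := hle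
      _ = ((k:ℝ)+1)/(1-ε) * (((m:ℝ)+2) * ((m:ℝ)+1)) * (1-ε) := by
          field_simp
    
lemma EN2_tendsto : Tendsto (EN2 k ε) atTop
    (nhds ((((k:ℝ)+c₀)^2 + c₀ + c₁ + ε*((k:ℝ)+c₀))/(1-ε)^2)) := by
  have h1e : (0:ℝ) < 1 - ε := by linarith
  have hmain := main_tendsto k hk (fun r => ((r:ℝ)^2 + ε*(r:ℝ))/(1-ε)^2)
    (2*((k:ℝ)+1)^2/(1-ε)^2) ?_
  · rw [L2_eq hk h0 h1] at hmain
    have heq : EN2 k ε = fun n => (∑ r ∈ Finset.Icc k n,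
        (((r:ℝ)^2 + ε*(r:ℝ))/(1-ε)^2) * PM k n r) - Err2 k ε n :=
      funext (fun n => EN2_eq hk h0 h1 n)
    rw [heq]
    have := hmain.sub (Err2_tendsto_zero hk h0 h1)
    simpa using this
  · intro m
    have hq0 : (0:ℝ) ≤ ((k+m:ℕ):ℝ)^2 + ε*((k+m:ℕ):ℝ) := by positivity
    have hnn : (0:ℝ) ≤ (((k+m:ℕ):ℝ)^2 + ε*((k+m:ℕ):ℝ))/(1-ε)^2 := by positivity
    rw [abs_of_nonneg hnn]
    rw [div_le_iff₀ (by positivity : (0:ℝ) < (1-ε)^2)]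
    have hle : ((k+m:ℕ):ℝ)^2 + ε*((k+m:ℕ):ℝ)
        ≤ 2*((k:ℝ)+1)^2 * (((m:ℝ)+2) * ((m:ℝ)+1)) := by
      push_cast
      have hk0 : (0:ℝ) ≤ (k:ℝ) := Nat.cast_nonneg k
      have hm0 : (0:ℝ) ≤ (m:ℝ) := Nat.cast_nonneg m
      have hb1 : (k:ℝ) + (m:ℝ) ≤ ((k:ℝ)+1) * ((m:ℝ)+1) := by nlinarith
      have hb2 : ((k:ℝ)+(m:ℝ))^2 ≤ ((k:ℝ)+1)^2 * ((m:ℝ)+1)^2 := by nlinarith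
      have hb3 : ε*((k:ℝ)+(m:ℝ)) ≤ (k:ℝ)+(m:ℝ) := by nlinarith
      nlinarith
    calc ((k+m:ℕ):ℝ)^2 + ε*((k+m:ℕ):ℝ)
        ≤ 2*((k:ℝ)+1)^2 * (((m:ℝ)+2) * ((m:ℝ)+1)) := hle
      _ = 2*((k:ℝ)+1)^2/(1-ε)^2 * (((m:ℝ)+2) * ((m:ℝ)+1)) * (1-ε)^2 := by
          field_simp

end ErrBounds

theorem variance_round_length_limit' (k : ℕ) (hk : 1 ≤ k) (ε : ℝ)
    (h₀ : 0 ≤ ε) (h₁ : ε < 1) :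
    Tendsto (fun n : ℕ => EN2 k ε n - (EN k ε n) ^ 2)
      atTop (nhds ((((k : ℝ) + c₀) * ε + c₀ + c₁) / (1 - ε) ^ 2)) := by
  have h1e : (0:ℝ) < 1 - ε := by linarith
  have hEN := EN_tendsto hk h₀ h₁
  have hEN2 := EN2_tendsto hk h₀ h₁
  have h := hEN2.sub (hEN.pow 2)
  have hval : (((k:ℝ)+c₀)^2 + c₀ + c₁ + ε*((k:ℝ)+c₀))/(1-ε)^2
      - (((k:ℝ) + c₀)/(1-ε))^2 = (((k : ℝ) + c₀) * ε + c₀ + c₁) / (1 - ε) ^ 2 := by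
    rw [div_pow]
    rw [div_sub_div_same]
    ring_nf
  rwa [hval] at h

end VRL

/-- `lim_{n→∞} Var[N_n] = lim_{n→∞} (E[N_n²] − E[N_n]²)
  = ((k + c₀)ε + c₀ + c₁)/(1 − ε)²`. -/
theorem variance_round_length_limit (k : ℕ) (hk : 1 ≤ k) (ε : ℝ)
    (h₀ : 0 ≤ ε) (h₁ : ε < 1) :
    Tendsto (fun n : ℕ => EN2 k ε n - (EN k ε n) ^ 2)
      atTop (nhds ((((k : ℝ) + c₀) * ε + c₀ + c₁) / (1 - ε) ^ 2)) :=
  VRL.variance_round_length_limit' k hk ε h₀ h₁
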